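/- arXiv:2107.11363 — 9 statements merged into one kernel-verified Lean document; each statement's English description precedes it below -/
import Mathlib

section
/- Let n ∈ ℕ, n ≥ 1, m ∈ ℕ with m ≤ n, and for z ∈ ℂ define Q(z) = (z^{m+n+1}/m!) ∫₀¹ t^m (1-t)^n e^{-zt} dt. Then for every z ∈ ℂ with z ≠ 0, Q(z) = ∑_{k=0}^{n} (-1)^{n-k} ((m+n-k)!/m!) C(n,k) z^k + e^{-z} ∑_{k=0}^{m} (-1)^{n-1} ((m+n-k)!/m!) C(m,k) z^k. -/
open Polynomial Finset


lemma evalzero (c : ℂ) (t j : ℕ) :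
    ((Polynomial.derivative)^[j] (C c * X ^ t)).eval 0 = if t = j then c * j.factorial else 0 := by
  rw [Polynomial.iterate_derivative_C_mul, Polynomial.iterate_derivative_X_pow_eq_smul]
  simp only [eval_mul, eval_C, eval_smul, eval_pow, eval_X, smul_eq_mul]
  rcases eq_or_ne t j with h | h
  · subst h; simp [Nat.descFactorial_self]
  · rcases lt_or_gt_of_ne h with h' | h'
    · simp [Nat.descFactorial_eq_zero_iff_lt.2 h', h]
    · rw [if_neg h, zero_pow (by omega), mul_zero, mul_zero]

lemma expand_pow (b : ℕ) : ((1 : ℂ[X]) - X) ^ b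
    = ∑ k ∈ range (b + 1), C ((-1 : ℂ) ^ k * (b.choose k)) * X ^ k := by
  rw [sub_pow]
  rw [← Finset.sum_range_reflect]
  refine Finset.sum_congr rfl fun k hk => ?_
  simp only [Finset.mem_range] at hk
  have hkb : k ≤ b := by omega
  have h1 : b + 1 - 1 - k = b - k := by omega
  have h2 : b - (b - k) = k := by omega
  rw [h1, h2, one_pow, Nat.choose_symm hkb]
  have hsign : (-1 : ℂ[X]) ^ (b - k + b) = C ((-1 : ℂ) ^ k) := by
    have : (-1 : ℂ[X]) ^ (b - k + b) * (-1) ^ k = (-1) ^ (b - k + b + k) := by rw [pow_add, pow_add, pow_add]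
    have h3 : b - k + b + k = 2 * b := by omega
    rw [h3] at this
    have h4 : ((-1 : ℂ[X])) ^ (2 * b) = 1 := by rw [pow_mul]; norm_num
    have := this.trans h4
    calc (-1 : ℂ[X]) ^ (b - k + b) = (-1) ^ (b - k + b) * ((-1)^k * (-1)^k) := by
          rw [← pow_add]; rw [← two_mul, pow_mul]; norm_num
      _ = ((-1) ^ (b - k + b) * (-1)^k) * (-1)^k := by ring
      _ = (-1)^k := by rw [this, one_mul]
      _ = C ((-1:ℂ)^k) := by simp [C_neg]
  rw [hsign]
  rw [C_mul, ← Polynomial.C_eq_natCast]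
  ring
lemma L1 (a b j : ℕ) :
    ((Polynomial.derivative)^[j] (X ^ a * ((1 : ℂ[X]) - X) ^ b)).eval 0 =
      if a ≤ j ∧ j ≤ a + b then (-1 : ℂ) ^ (j - a) * (b.choose (j - a)) * j.factorial else 0 := by
  have hp : (X ^ a * ((1 : ℂ[X]) - X) ^ b)
      = ∑ k ∈ range (b + 1), C ((-1 : ℂ) ^ k * (b.choose k)) * X ^ (a + k) := by
    rw [expand_pow, Finset.mul_sum]
    refine Finset.sum_congr rfl fun k _ => ?_
    rw [pow_add]; ring
  rw [hp, Polynomial.iterate_derivative_sum, Polynomial.eval_finset_sum]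
  simp only [evalzero]
  rcases Classical.em (a ≤ j ∧ j ≤ a + b) with h | h
  · rw [if_pos h]
    rw [Finset.sum_eq_single (j - a)]
    · rw [if_pos (by omega)]
    · intro k hk hne
      rw [if_neg (by omega)]
    · intro hmem
      simp only [Finset.mem_range] at hmem
      omega
  · rw [if_neg h]
    refine Finset.sum_eq_zero fun k hk => ?_
    simp only [Finset.mem_range] at hk
    rw [if_neg (by omega)]

lemma iter_deriv_comp (p : ℂ[X]) (j : ℕ) :
    (Polynomial.derivative)^[j] (p.comp (1 - X)) =
      C ((-1 : ℂ) ^ j) * ((Polynomial.derivative)^[j] p).comp (1 - X) := by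
  induction j generalizing p with
  | zero => simp
  | succ j ih =>
    rw [Function.iterate_succ_apply, Polynomial.derivative_comp]
    have h1 : Polynomial.derivative ((1 : ℂ[X]) - X) = -1 := by
      simp [Polynomial.derivative_sub]
    rw [h1]
    have : (-1 : ℂ[X]) * (Polynomial.derivative p).comp (1 - X)
        = (C (-1 : ℂ) * (Polynomial.derivative p)).comp (1 - X) := by
      simp [Polynomial.mul_comp]
    rw [this]
    rw [ih]
    rw [Polynomial.iterate_derivative_C_mul, Function.iterate_succ_apply, Polynomial.mul_comp]
    simp only [Polynomial.C_comp]
    rw [← mul_assoc, ← C_mul]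
    congr 2

lemma eval_one (p : ℂ[X]) (j : ℕ) :
    ((Polynomial.derivative)^[j] p).eval 1 =
      (-1 : ℂ) ^ j * ((Polynomial.derivative)^[j] (p.comp (1 - X))).eval 0 := by
  rw [iter_deriv_comp, Polynomial.eval_mul, Polynomial.eval_C, Polynomial.eval_comp]
  have h : Polynomial.eval (0:ℂ) (1 - X) = 1 := by simp
  rw [h, ← mul_assoc, ← pow_add, ← two_mul, pow_mul]
  norm_num

lemma comp_eq (a b : ℕ) :
    ((X ^ a * ((1 : ℂ[X]) - X) ^ b)).comp (1 - X) = X ^ b * ((1 : ℂ[X]) - X) ^ a := by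
  simp only [Polynomial.mul_comp, Polynomial.pow_comp, Polynomial.X_comp, Polynomial.sub_comp,
    Polynomial.one_comp]
  rw [sub_sub_cancel]
  ring

lemma cont_aux (p : ℂ[X]) (z : ℂ) :
    Continuous (fun t : ℝ => p.eval (t : ℂ) * Complex.exp (-z * t)) := by
  apply Continuous.mul
  · exact p.continuous.comp Complex.continuous_ofReal
  · exact Complex.continuous_exp.comp (continuous_const.mul Complex.continuous_ofReal)

lemma ibp (z : ℂ) (hz : z ≠ 0) (p : ℂ[X]) :
    z * ∫ t in (0:ℝ)..1, p.eval (t : ℂ) * Complex.exp (-z * t) =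
      p.eval 0 - Complex.exp (-z) * p.eval 1 +
        ∫ t in (0:ℝ)..1, (Polynomial.derivative p).eval (t : ℂ) * Complex.exp (-z * t) := by
  set F : ℝ → ℂ := fun t => p.eval (t : ℂ) * (-(z⁻¹) * Complex.exp (-z * t)) with hF
  set f : ℝ → ℂ := fun t => (Polynomial.derivative p).eval (t : ℂ) * (-(z⁻¹) * Complex.exp (-z * t))
      + p.eval (t : ℂ) * Complex.exp (-z * t) with hf
  have hderiv : ∀ t ∈ Set.uIcc (0:ℝ) 1, HasDerivAt F (f t) t := by
    intro t _
    have h1 : HasDerivAt (fun t : ℝ => p.eval (t : ℂ)) ((Polynomial.derivative p).eval (t : ℂ)) t :=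
      (p.hasDerivAt (t : ℂ)).comp_ofReal
    have h2 : HasDerivAt (fun w : ℂ => Complex.exp (-z * w)) (-z * Complex.exp (-z * t)) (t : ℂ) := by
      have := ((hasDerivAt_id ((t : ℝ) : ℂ)).const_mul (-z)).cexp
      simpa [mul_comm] using this
    have h3 : HasDerivAt (fun t : ℝ => -(z⁻¹) * Complex.exp (-z * t))
        (-(z⁻¹) * (-z * Complex.exp (-z * t))) t := (h2.comp_ofReal).const_mul _
    have h4 := h1.mul h3
    refine h4.congr_deriv ?_
    symm
    rw [hf]
    have hzz : -(z⁻¹) * -z = 1 := by field_simp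
    simp only []
    ring_nf
    rw [mul_comm z z⁻¹, inv_mul_cancel₀ hz]
    ring
  have hint : IntervalIntegrable f MeasureTheory.volume 0 1 := by
    apply Continuous.intervalIntegrable
    apply Continuous.add
    · exact ((Polynomial.derivative p).continuous.comp Complex.continuous_ofReal).mul
        (continuous_const.mul (Complex.continuous_exp.comp (continuous_const.mul Complex.continuous_ofReal)))
    · exact cont_aux p z
  have key := intervalIntegral.integral_eq_sub_of_hasDerivAt hderiv hint
  have hsplit : ∫ t in (0:ℝ)..1, f t =
      (-(z⁻¹)) * (∫ t in (0:ℝ)..1, (Polynomial.derivative p).eval (t : ℂ) * Complex.exp (-z * t))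
      + ∫ t in (0:ℝ)..1, p.eval (t : ℂ) * Complex.exp (-z * t) := by
    rw [hf]
    rw [intervalIntegral.integral_add]
    · congr 1
      rw [← intervalIntegral.integral_const_mul]
      congr 1; funext t; ring
    · apply Continuous.intervalIntegrable
      exact ((Polynomial.derivative p).continuous.comp Complex.continuous_ofReal).mul
        (continuous_const.mul (Complex.continuous_exp.comp (continuous_const.mul Complex.continuous_ofReal)))
    · exact (cont_aux p z).intervalIntegrable 0 1
  rw [hsplit] at key
  have hF1 : F 1 = p.eval 1 * (-(z⁻¹) * Complex.exp (-z)) := by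
    rw [hF]; norm_num
  have hF0 : F 0 = p.eval 0 * (-(z⁻¹)) := by
    rw [hF]; norm_num
  rw [hF1, hF0] at key
  have hmul : z * z⁻¹ = 1 := mul_inv_cancel₀ hz
  linear_combination z * key +
    ((∫ t in (0:ℝ)..1, (Polynomial.derivative p).eval (t : ℂ) * Complex.exp (-z * t))
      + p.eval 0 - Complex.exp (-z) * p.eval 1) * hmul
lemma iter_ibp (z : ℂ) (hz : z ≠ 0) :
    ∀ (N : ℕ) (p : ℂ[X]), (Polynomial.derivative)^[N + 1] p = 0 →
      z ^ (N + 1) * ∫ t in (0:ℝ)..1, p.eval (t : ℂ) * Complex.exp (-z * t) =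
        ∑ j ∈ range (N + 1), z ^ (N - j) *
          (((Polynomial.derivative)^[j] p).eval 0
            - Complex.exp (-z) * ((Polynomial.derivative)^[j] p).eval 1) := by
  intro N
  induction N with
  | zero =>
    intro p hp
    rw [pow_one, ibp z hz p]
    have h0 : Polynomial.derivative p = 0 := by simpa using hp
    simp [h0]
  | succ N ih =>
    intro p hp
    have hstep := ibp z hz p
    have hd : (Polynomial.derivative)^[N + 1] (Polynomial.derivative p) = 0 := by
      rw [← Function.iterate_succ_apply]; exact hp
    have hih := ih (Polynomial.derivative p) hd
    calc z ^ (N + 2) * ∫ t in (0:ℝ)..1, p.eval (t : ℂ) * Complex.exp (-z * t)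
        = z ^ (N + 1) * (z * ∫ t in (0:ℝ)..1, p.eval (t : ℂ) * Complex.exp (-z * t)) := by ring
      _ = z ^ (N + 1) * (p.eval 0 - Complex.exp (-z) * p.eval 1)
          + z ^ (N + 1) * ∫ t in (0:ℝ)..1,
              (Polynomial.derivative p).eval (t : ℂ) * Complex.exp (-z * t) := by
          rw [hstep]; ring
      _ = z ^ (N + 1) * (p.eval 0 - Complex.exp (-z) * p.eval 1)
          + ∑ j ∈ range (N + 1), z ^ (N - j) *
              (((Polynomial.derivative)^[j + 1] p).eval 0
                - Complex.exp (-z) * ((Polynomial.derivative)^[j + 1] p).eval 1) := by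
          rw [hih]
          simp only [← Function.iterate_succ_apply]
      _ = ∑ j ∈ range (N + 2), z ^ (N + 1 - j) *
            (((Polynomial.derivative)^[j] p).eval 0
              - Complex.exp (-z) * ((Polynomial.derivative)^[j] p).eval 1) := by
          conv_rhs => rw [Finset.sum_range_succ', add_comm]
          congr 1
          refine Finset.sum_congr rfl fun j hj => ?_
          have h5 : N + 1 - (j + 1) = N - j := by omega
          rw [h5]

theorem stmt_5 (n m : ℕ) (hn : 1 ≤ n) (hm : m ≤ n) (z : ℂ) (hz : z ≠ 0) :
    (z ^ (m + n + 1) / (m.factorial : ℂ)) *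
        ∫ t in (0:ℝ)..1, (t : ℂ) ^ m * (1 - (t : ℂ)) ^ n * Complex.exp (-z * t) =
      (∑ k ∈ Finset.range (n + 1),
        (-1 : ℂ) ^ (n - k) * (((m + n - k).factorial : ℂ) / (m.factorial : ℂ)) *
          (n.choose k : ℂ) * z ^ k)
      + Complex.exp (-z) *
        ∑ k ∈ Finset.range (m + 1),
          (-1 : ℂ) ^ (n - 1) * (((m + n - k).factorial : ℂ) / (m.factorial : ℂ)) *
            (m.choose k : ℂ) * z ^ k := by
  have hInt : ∫ t in (0:ℝ)..1, (t : ℂ) ^ m * (1 - (t : ℂ)) ^ n * Complex.exp (-z * t)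
      = ∫ t in (0:ℝ)..1, (X ^ m * ((1 : ℂ[X]) - X) ^ n).eval (t : ℂ) * Complex.exp (-z * t) := by
    refine intervalIntegral.integral_congr fun t _ => ?_
    simp
  have hdeg : (Polynomial.derivative)^[m + n + 1] (X ^ m * ((1 : ℂ[X]) - X) ^ n) = 0 := by
    apply Polynomial.iterate_derivative_eq_zero
    have h1 : (X ^ m * ((1 : ℂ[X]) - X) ^ n).natDegree ≤ m + n := by
      refine le_trans (Polynomial.natDegree_mul_le) (add_le_add ?_ ?_)
      · simp [Polynomial.natDegree_X_pow]
      · refine le_trans (Polynomial.natDegree_pow_le) ?_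
        have : ((1 : ℂ[X]) - X).natDegree ≤ 1 :=
          le_trans (Polynomial.natDegree_sub_le _ _) (by simp)
        calc n * ((1 : ℂ[X]) - X).natDegree ≤ n * 1 := Nat.mul_le_mul_left n this
          _ = n := by omega
    omega
  have key := iter_ibp z hz (m + n) (X ^ m * ((1 : ℂ[X]) - X) ^ n) hdeg
  -- eval at 1 via reflection
  have hB : ∀ j : ℕ, ((Polynomial.derivative)^[j] (X ^ m * ((1 : ℂ[X]) - X) ^ n)).eval 1
      = (-1 : ℂ) ^ j * (if n ≤ j ∧ j ≤ n + m then
          (-1 : ℂ) ^ (j - n) * (m.choose (j - n)) * j.factorial else 0) := by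
    intro j
    rw [eval_one, comp_eq, L1]
  have hSA : ∑ j ∈ range (m + n + 1), z ^ (m + n - j) *
        ((Polynomial.derivative)^[j] (X ^ m * ((1 : ℂ[X]) - X) ^ n)).eval 0
      = ∑ k ∈ range (n + 1),
          (-1 : ℂ) ^ (n - k) * ((m + n - k).factorial : ℂ) * (n.choose k) * z ^ k := by
    rw [← Finset.sum_range_reflect]
    rw [← Finset.sum_subset (Finset.range_subset_range.2 (by omega) : range (n+1) ⊆ range (m+n+1))]
    · refine Finset.sum_congr rfl fun k hk => ?_
      simp only [Finset.mem_range] at hk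
      have h1 : m + n + 1 - 1 - k = m + n - k := by omega
      rw [h1, L1, if_pos (by omega)]
      have h2 : m + n - (m + n - k) = k := by omega
      have h3 : m + n - k - m = n - k := by omega
      rw [h2, h3, Nat.choose_symm (by omega : k ≤ n)]
      ring
    · intro k hk hk2
      simp only [Finset.mem_range] at hk hk2
      have h1 : m + n + 1 - 1 - k = m + n - k := by omega
      rw [h1, L1, if_neg (by omega)]
      ring
  have hSB : ∑ j ∈ range (m + n + 1), z ^ (m + n - j) *
        ((Polynomial.derivative)^[j] (X ^ m * ((1 : ℂ[X]) - X) ^ n)).eval 1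
      = ∑ k ∈ range (m + 1),
          (-1 : ℂ) ^ n * ((m + n - k).factorial : ℂ) * (m.choose k) * z ^ k := by
    rw [← Finset.sum_range_reflect]
    rw [← Finset.sum_subset (Finset.range_subset_range.2 (by omega) : range (m+1) ⊆ range (m+n+1))]
    · refine Finset.sum_congr rfl fun k hk => ?_
      simp only [Finset.mem_range] at hk
      have h1 : m + n + 1 - 1 - k = m + n - k := by omega
      rw [h1, hB, if_pos (by omega)]
      have h2 : m + n - (m + n - k) = k := by omega
      have h3 : m + n - k - n = m - k := by omega
      rw [h2, h3, Nat.choose_symm (by omega : k ≤ m)]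
      have hsgn : (-1 : ℂ) ^ (m + n - k) * (-1 : ℂ) ^ (m - k) = (-1 : ℂ) ^ n := by
        rw [← pow_add]
        have h5 : m + n - k + (m - k) = n + 2 * (m - k) := by omega
        rw [h5, pow_add, pow_mul]
        norm_num
      calc z ^ k * ((-1:ℂ) ^ (m + n - k) * ((-1:ℂ) ^ (m - k) * (m.choose k) * ((m+n-k).factorial)))
          = ((-1:ℂ) ^ (m + n - k) * (-1:ℂ) ^ (m - k)) * ((m.choose k) * ((m+n-k).factorial)) * z ^ k := by ring
        _ = (-1:ℂ) ^ n * ((m + n - k).factorial : ℂ) * (m.choose k) * z ^ k := by rw [hsgn]; ring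
    · intro k hk hk2
      simp only [Finset.mem_range] at hk hk2
      have h1 : m + n + 1 - 1 - k = m + n - k := by omega
      rw [h1, hB, if_neg (by omega)]
      ring
  have hsplit : ∑ j ∈ range (m + n + 1), z ^ (m + n - j) *
        (((Polynomial.derivative)^[j] (X ^ m * ((1 : ℂ[X]) - X) ^ n)).eval 0
          - Complex.exp (-z) * ((Polynomial.derivative)^[j] (X ^ m * ((1 : ℂ[X]) - X) ^ n)).eval 1)
      = (∑ j ∈ range (m + n + 1), z ^ (m + n - j) *
          ((Polynomial.derivative)^[j] (X ^ m * ((1 : ℂ[X]) - X) ^ n)).eval 0)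
        - Complex.exp (-z) * ∑ j ∈ range (m + n + 1), z ^ (m + n - j) *
          ((Polynomial.derivative)^[j] (X ^ m * ((1 : ℂ[X]) - X) ^ n)).eval 1 := by
    rw [Finset.mul_sum, ← Finset.sum_sub_distrib]
    refine Finset.sum_congr rfl fun j _ => ?_
    ring
  have main : z ^ (m + n + 1) * ∫ t in (0:ℝ)..1, (t : ℂ) ^ m * (1 - (t : ℂ)) ^ n * Complex.exp (-z * t)
      = (∑ k ∈ range (n + 1), (-1 : ℂ) ^ (n - k) * ((m + n - k).factorial : ℂ) * (n.choose k) * z ^ k)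
        - Complex.exp (-z) * ∑ k ∈ range (m + 1),
            (-1 : ℂ) ^ n * ((m + n - k).factorial : ℂ) * (m.choose k) * z ^ k := by
    rw [hInt, key, hsplit, hSA, hSB]
  have hsign : (-1 : ℂ) ^ (n - 1) = -(-1 : ℂ) ^ n := by
    have h : n - 1 + 1 = n := by omega
    conv_rhs => rw [← h]
    rw [pow_succ]
    ring
  have hM : (m.factorial : ℂ) ≠ 0 := by
    exact_mod_cast Nat.cast_ne_zero.2 (Nat.factorial_ne_zero m)
  have main2 : z ^ (m + n + 1) * ∫ t in (0:ℝ)..1, (t : ℂ) ^ m * (1 - (t : ℂ)) ^ n * Complex.exp (-z * t)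
      = (∑ k ∈ range (n + 1), (-1 : ℂ) ^ (n - k) * ((m + n - k).factorial : ℂ) * (n.choose k) * z ^ k)
        + Complex.exp (-z) * ∑ k ∈ range (m + 1),
            (-1 : ℂ) ^ (n - 1) * ((m + n - k).factorial : ℂ) * (m.choose k) * z ^ k := by
    rw [main, sub_eq_add_neg]
    congr 1
    have hterm : ∀ k ∈ range (m + 1),
        (-1 : ℂ) ^ (n - 1) * ((m + n - k).factorial : ℂ) * (m.choose k) * z ^ k
          = -((-1 : ℂ) ^ n * ((m + n - k).factorial : ℂ) * (m.choose k) * z ^ k) := by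
      intro k _
      rw [hsign]; ring
    rw [Finset.sum_congr rfl hterm, Finset.sum_neg_distrib, mul_neg]
  calc (z ^ (m + n + 1) / (m.factorial : ℂ)) *
        ∫ t in (0:ℝ)..1, (t : ℂ) ^ m * (1 - (t : ℂ)) ^ n * Complex.exp (-z * t)
      = (m.factorial : ℂ)⁻¹ * (z ^ (m + n + 1) *
          ∫ t in (0:ℝ)..1, (t : ℂ) ^ m * (1 - (t : ℂ)) ^ n * Complex.exp (-z * t)) := by
        rw [div_eq_mul_inv]; ring
    _ = (m.factorial : ℂ)⁻¹ *
        ((∑ k ∈ range (n + 1), (-1 : ℂ) ^ (n - k) * ((m + n - k).factorial : ℂ) * (n.choose k) * z ^ k)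
          + Complex.exp (-z) * ∑ k ∈ range (m + 1),
              (-1 : ℂ) ^ (n - 1) * ((m + n - k).factorial : ℂ) * (m.choose k) * z ^ k) := by
        rw [main2]
    _ = _ := by
        rw [mul_add]
        congr 1
        · rw [Finset.mul_sum]
          refine Finset.sum_congr rfl fun k _ => ?_
          rw [div_eq_mul_inv]
          ring
        · rw [← mul_assoc, mul_comm ((m.factorial : ℂ)⁻¹) (Complex.exp (-z)), mul_assoc,
            Finset.mul_sum]
          congr 1
          refine Finset.sum_congr rfl fun k _ => ?_
          rw [div_eq_mul_inv]
          ring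
end

section
/- Let n ∈ ℕ, n ≥ 1, m ∈ ℕ with m ≤ n, and define the quasipolynomial Δ̃(z) = z^n + ∑_{k=0}^{n-1} b_k z^k + e^{-z} ∑_{k=0}^{m} β_k z^k with b_k = (-1)^{n-k} (n!/k!) C(m+n-k, m) and β_k = (-1)^{n-1} (m+n-k)!/(k!(m-k)!). Then z = 0 is a zero of Δ̃ of multiplicity exactly m+n+1, i.e., Δ̃^{(j)}(0) = 0 for all 0 ≤ j ≤ m+n and Δ̃^{(m+n+1)}(0) ≠ 0. -/
set_option maxHeartbeats 1000000

open Finset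

private lemma contDiffF (c : ℂ) (k : ℕ) :
    ContDiff ℂ ⊤ (fun z : ℂ => Complex.exp (c * z) * z ^ k) :=
  (Complex.contDiff_exp.comp (contDiff_const.mul contDiff_id)).mul (contDiff_id.pow k)

private lemma itd_add {f g : ℂ → ℂ} (hf : ContDiff ℂ ⊤ f) (hg : ContDiff ℂ ⊤ g)
    (n : ℕ) (x : ℂ) :
    iteratedDeriv n (fun z => f z + g z) x = iteratedDeriv n f x + iteratedDeriv n g x := by
  have := iteratedDerivWithin_add (n := n) (f := f) (g := g) (Set.mem_univ x) uniqueDiffOn_univ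
    ((hf.of_le le_top).contDiffWithinAt) ((hg.of_le le_top).contDiffWithinAt)
  simpa [iteratedDerivWithin_univ, Pi.add_def] using this

private lemma itd_cmul (c : ℂ) {f : ℂ → ℂ} (hf : ContDiff ℂ ⊤ f) (n : ℕ) (x : ℂ) :
    iteratedDeriv n (fun z => c * f z) x = c * iteratedDeriv n f x := by
  have := iteratedDerivWithin_const_mul (n := n) (f := f) (Set.mem_univ x) uniqueDiffOn_univ c
    ((hf.of_le le_top).contDiffWithinAt)
  simpa [iteratedDerivWithin_univ] using this

private lemma itd_zero_fun (n : ℕ) (x : ℂ) : iteratedDeriv n (fun _ : ℂ => (0:ℂ)) x = 0 := by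
  induction n generalizing x with
  | zero => simp
  | succ n ih =>
    rw [iteratedDeriv_succ']
    simpa using ih x

private lemma itd_sum {ι : Type*} (s : Finset ι) (f : ι → ℂ → ℂ)
    (hf : ∀ i ∈ s, ContDiff ℂ ⊤ (f i)) (n : ℕ) (x : ℂ) :
    iteratedDeriv n (fun z => ∑ i ∈ s, f i z) x = ∑ i ∈ s, iteratedDeriv n (f i) x := by
  induction s using Finset.cons_induction with
  | empty => simpa using itd_zero_fun n x
  | cons a s ha ih =>
    simp only [Finset.sum_cons]
    rw [itd_add (hf a (Finset.mem_cons_self a s))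
      (ContDiff.sum fun i hi => hf i (Finset.mem_cons_of_mem hi)),
      ih (fun i hi => hf i (Finset.mem_cons_of_mem hi))]

private lemma lemD (c : ℂ) : ∀ j k : ℕ,
    iteratedDeriv j (fun z : ℂ => Complex.exp (c * z) * z ^ k) 0
      = c ^ (j - k) * (j.choose k : ℂ) * (k.factorial : ℂ) := by
  intro j
  induction j with
  | zero =>
    intro k
    cases k with
    | zero => simp
    | succ k => simp
  | succ j ih =>
    intro k
    rw [iteratedDeriv_succ']
    have hderiv : deriv (fun z : ℂ => Complex.exp (c * z) * z ^ k)
        = fun z => c * (Complex.exp (c * z) * z ^ k)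
          + (k : ℂ) * (Complex.exp (c * z) * z ^ (k - 1)) := by
      funext z
      have h1 : HasDerivAt (fun z : ℂ => Complex.exp (c * z)) (c * Complex.exp (c * z)) z := by
        simpa [mul_comm, Function.comp_def] using
          (Complex.hasDerivAt_exp (c * z)).comp z ((hasDerivAt_id z).const_mul c)
      have h2 : HasDerivAt (fun z : ℂ => z ^ k) ((k : ℂ) * z ^ (k - 1)) z := hasDerivAt_pow k z
      rw [HasDerivAt.deriv (f := fun z : ℂ => Complex.exp (c * z) * z ^ k) (h1.mul h2)]
      ring
    rw [hderiv]
    rw [itd_add (contDiff_const.mul (contDiffF c k)) (contDiff_const.mul (contDiffF c (k-1))),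
      itd_cmul c (contDiffF c k), itd_cmul (k:ℂ) (contDiffF c (k-1)), ih k, ih (k-1)]
    cases k with
    | zero => simp [pow_succ]; ring
    | succ k =>
      rcases le_or_gt (k+1) j with hkj | hkj
      · obtain ⟨d, hd⟩ : ∃ d, j - k = d + 1 := ⟨j - k - 1, by omega⟩
        have e1 : j - (k + 1) = d := by omega
        have e2 : j + 1 - (k + 1) = d + 1 := by omega
        have e3 : k + 1 - 1 = k := rfl
        rw [e1, e2, e3, hd, Nat.choose_succ_succ j k]
        push_cast
        rw [Nat.factorial_succ]
        push_cast
        ring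
      · rcases Nat.lt_or_ge j k with hjk | hjk
        · rw [Nat.choose_eq_zero_of_lt (by omega), Nat.choose_eq_zero_of_lt (by omega),
            Nat.choose_eq_zero_of_lt (by omega)]
          simp
        · have : j = k := by omega
          subst this
          simp [Nat.choose_succ_self, Nat.choose_self, Nat.factorial_succ]
          try ring

private lemma alt_pascal (m : ℕ) (g : ℕ → ℂ) :
    ∑ k ∈ range (m+2), (-1:ℂ)^k * ((m+1).choose k : ℂ) * g k
      = ∑ k ∈ range (m+1), (-1:ℂ)^k * (m.choose k : ℂ) * g k
        - ∑ k ∈ range (m+1), (-1:ℂ)^k * (m.choose k : ℂ) * g (k+1) := by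
  have key : ∀ k, (-1:ℂ)^(k+1) * ((m+1).choose (k+1) : ℂ) * g (k+1)
      = -((-1:ℂ)^k * (m.choose k : ℂ) * g (k+1))
        - (-1:ℂ)^k * (m.choose (k+1) : ℂ) * g (k+1) := by
    intro k; rw [Nat.choose_succ_succ]; push_cast; ring
  rw [Finset.sum_range_succ' (fun k => (-1:ℂ)^k * ((m+1).choose k : ℂ) * g k) (m+1)]
  simp only [key]
  rw [Finset.sum_sub_distrib, Finset.sum_neg_distrib]
  rw [Finset.sum_range_succ' (fun k => (-1:ℂ)^k * (m.choose k : ℂ) * g k) m]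
  rw [Finset.sum_range_succ (fun k => (-1:ℂ)^k * (m.choose (k+1) : ℂ) * g (k+1)) m]
  have hlast : ((m.choose (m+1) : ℕ) : ℂ) = 0 := by
    rw [Nat.choose_succ_self]; norm_num
  rw [hlast]
  have hsh : ∀ k, (-1:ℂ)^(k+1) * (m.choose (k+1) : ℂ) * g (k+1)
      = -((-1:ℂ)^k * (m.choose (k+1) : ℂ) * g (k+1)) := by
    intro k; ring
  simp only [hsh]
  rw [Finset.sum_neg_distrib]
  simp only [Nat.choose_zero_right, Nat.cast_one]
  ring

private lemma identI : ∀ (m N r : ℕ), m ≤ N →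
    ∑ k ∈ range (m+1), (-1:ℂ)^k * (m.choose k : ℂ) * ((N-k).choose r : ℂ)
      = if m ≤ r then (((N-m).choose (r-m) : ℕ) : ℂ) else 0 := by
  intro m
  induction m with
  | zero => intro N r _; simp
  | succ m ih =>
    intro N r hmN
    have e0 : m + 1 + 1 = m + 2 := rfl
    rw [e0, alt_pascal m (fun k => ((N-k).choose r : ℂ))]
    have esh : ∀ k, (((N-(k+1)).choose r : ℕ) : ℂ) = (((N-1-k).choose r : ℕ) : ℂ) := by
      intro k; congr 2; omega
    simp only [esh]
    rw [ih N r (by omega), ih (N-1) r (by omega)]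
    rcases le_or_gt (m+1) r with h1 | h1
    · rw [if_pos (by omega), if_pos (by omega), if_pos h1]
      have hA : (N - m).choose (r - m) = (N-(m+1)).choose (r-(m+1)) + (N-1-m).choose (r-m) := by
        have h2 : N - m = (N - (m+1)) + 1 := by omega
        have h3 : r - m = (r - (m+1)) + 1 := by omega
        have h4 : N - 1 - m = N - (m+1) := by omega
        rw [h2, h3, h4, Nat.choose_succ_succ]
      rw [hA]
      push_cast
      ring
    · rcases le_or_gt m r with h2 | h2
      · have : r = m := by omega
        subst this
        rw [if_pos le_rfl, if_pos le_rfl, if_neg (by omega)]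
        simp [Nat.sub_self]
      · rw [if_neg (by omega), if_neg (by omega), if_neg (by omega)]
        ring

private lemma identV : ∀ (m x : ℕ),
    ∑ k ∈ range (m+1), (-1:ℂ)^k * (m.choose k : ℂ) / ((x+1+k : ℕ) : ℂ)
      = (m.factorial : ℂ) / ∏ i ∈ range (m+1), ((x+1+i : ℕ) : ℂ) := by
  intro m
  induction m with
  | zero => intro x; simp
  | succ m ih =>
    intro x
    have hne : ∀ (y : ℕ) (s : Finset ℕ), (∏ i ∈ s, ((y+1+i : ℕ) : ℂ)) ≠ 0 := by
      intro y s
      rw [Finset.prod_ne_zero_iff]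
      intro i _
      exact Nat.cast_ne_zero.mpr (by omega)
    have e0 : m + 1 + 1 = m + 2 := rfl
    have hdiv : ∀ k, (-1:ℂ)^k * ((m+1).choose k : ℂ) / ((x+1+k : ℕ) : ℂ)
        = (-1:ℂ)^k * ((m+1).choose k : ℂ) * (1 / ((x+1+k : ℕ) : ℂ)) := by
      intro k; ring
    simp only [hdiv, e0]
    rw [alt_pascal m (fun k => 1 / ((x+1+k : ℕ) : ℂ))]
    have hdiv2 : ∀ (mm : ℕ) (xx : ℕ), ∑ k ∈ range (mm+1), (-1:ℂ)^k * (mm.choose k : ℂ) * (1 / ((xx+1+k : ℕ) : ℂ))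
        = ∑ k ∈ range (mm+1), (-1:ℂ)^k * (mm.choose k : ℂ) / ((xx+1+k : ℕ) : ℂ) := by
      intro mm xx
      exact Finset.sum_congr rfl (fun k _ => by ring)
    have esh : ∀ k, (1 : ℂ) / ((x+1+(k+1) : ℕ) : ℂ) = 1 / ((x+1+1+k : ℕ) : ℂ) := by
      intro k; congr 2; omega
    simp only [esh]
    rw [hdiv2 m x, hdiv2 m (x+1), ih x, ih (x+1)]
    have hP1 : ∏ i ∈ range (m+2), ((x+1+i : ℕ) : ℂ)
        = (∏ i ∈ range (m+1), ((x+1+i : ℕ) : ℂ)) * ((x+1+(m+1) : ℕ) : ℂ) :=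
      Finset.prod_range_succ _ _
    have hP2 : ∏ i ∈ range (m+2), ((x+1+i : ℕ) : ℂ)
        = (∏ i ∈ range (m+1), ((x+1+1+i : ℕ) : ℂ)) * ((x+1 : ℕ) : ℂ) := by
      rw [Finset.prod_range_succ' (fun i => ((x+1+i : ℕ) : ℂ)) (m+1),
        show x+1+0 = x+1 from rfl]
      congr 1
      exact Finset.prod_congr rfl (fun i _ => by congr 1; omega)
    set P := ∏ i ∈ range (m+1), ((x+1+i : ℕ) : ℂ) with hPdef
    set Q := ∏ i ∈ range (m+1), ((x+1+1+i : ℕ) : ℂ) with hQdef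
    have hPne : P ≠ 0 := hne x _
    have hQne : Q ≠ 0 := by
      rw [hQdef]
      rw [Finset.prod_ne_zero_iff]
      intro i _
      exact Nat.cast_ne_zero.mpr (by omega)
    have hkey : P * ((x+1+(m+1) : ℕ) : ℂ) = Q * ((x+1 : ℕ) : ℂ) := by rw [← hP1, hP2]
    have hc2 : ((x+1+(m+1) : ℕ) : ℂ) ≠ 0 := Nat.cast_ne_zero.mpr (by omega)
    have hc1 : ((x+1 : ℕ) : ℂ) ≠ 0 := Nat.cast_ne_zero.mpr (by omega)
    have hrel : ((x+1+(m+1) : ℕ) : ℂ) = ((x+1 : ℕ) : ℂ) + ((m:ℂ) + 1) := by push_cast; ring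
    rw [Nat.factorial_succ]
    rw [hP1]
    rw [div_sub_div _ _ hPne hQne,
      div_eq_div_iff (mul_ne_zero hPne hQne) (mul_ne_zero hPne hc2)]
    push_cast [Nat.cast_add] at hkey hrel ⊢
    linear_combination (-(m.factorial : ℂ) * P) * hkey
      + ((m.factorial : ℂ) * P * Q) * hrel

private lemma sgn_sub {a b : ℕ} (h : b ≤ a) : (-1:ℂ)^(a-b) = (-1:ℂ)^a * (-1:ℂ)^b := by
  have h2 : (-1:ℂ)^b * (-1:ℂ)^b = 1 := by rw [← mul_pow]; norm_num
  have h1 : (-1:ℂ)^(a-b) * ((-1:ℂ)^b * (-1:ℂ)^b) = (-1:ℂ)^a * (-1:ℂ)^b := by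
    rw [← pow_add, ← pow_add, ← pow_add]
    congr 1
    omega
  rw [h2, mul_one] at h1
  exact h1

theorem stmt_6 (n m : ℕ) (hn : 1 ≤ n) (hm : m ≤ n)
    (b : ℕ → ℂ) (β : ℕ → ℂ)
    (hb : ∀ k, b k = (-1 : ℂ) ^ (n - k) * ((n.factorial : ℂ) / (k.factorial : ℂ)) *
      ((m + n - k).choose m : ℂ))
    (hβ : ∀ k, β k = (-1 : ℂ) ^ (n - 1) * ((m + n - k).factorial : ℂ) /
      ((k.factorial : ℂ) * ((m - k).factorial : ℂ)))
    (Δ : ℂ → ℂ)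
    (hΔ : ∀ z, Δ z = z ^ n + (∑ k ∈ Finset.range n, b k * z ^ k)
      + Complex.exp (-z) * ∑ k ∈ Finset.range (m + 1), β k * z ^ k) :
    (∀ j : ℕ, j ≤ m + n → iteratedDeriv j Δ 0 = 0) ∧
      iteratedDeriv (m + n + 1) Δ 0 ≠ 0 := by
  -- master formula
  have key : ∀ j : ℕ, iteratedDeriv j Δ 0 =
      (0:ℂ)^(j-n) * (j.choose n : ℂ) * (n.factorial : ℂ)
      + (∑ k ∈ range n, b k * ((0:ℂ)^(j-k) * (j.choose k : ℂ) * (k.factorial : ℂ)))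
      + ∑ k ∈ range (m+1), β k * ((-1:ℂ)^(j-k) * (j.choose k : ℂ) * (k.factorial : ℂ)) := by
    intro j
    have h1 : Δ = fun z => ((Complex.exp ((0:ℂ)*z) * z^n)
        + ∑ k ∈ range n, b k * (Complex.exp ((0:ℂ)*z) * z^k))
        + ∑ k ∈ range (m+1), β k * (Complex.exp ((-1:ℂ)*z) * z^k) := by
      funext z
      rw [hΔ z]
      simp only [zero_mul, Complex.exp_zero, one_mul, neg_one_mul]
      rw [Finset.mul_sum]
      congr 1
      exact Finset.sum_congr rfl fun k _ => by ring
    rw [h1]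
    have hsum1 : ContDiff ℂ ⊤ (fun z : ℂ => ∑ k ∈ range n, b k * (Complex.exp ((0:ℂ)*z) * z^k)) :=
      ContDiff.sum fun k _ => contDiff_const.mul (contDiffF 0 k)
    have hsum2 : ContDiff ℂ ⊤
        (fun z : ℂ => ∑ k ∈ range (m+1), β k * (Complex.exp ((-1:ℂ)*z) * z^k)) :=
      ContDiff.sum fun k _ => contDiff_const.mul (contDiffF (-1) k)
    rw [itd_add ((contDiffF 0 n).add hsum1) hsum2,
      itd_add (contDiffF 0 n) hsum1,
      itd_sum (range n) _ (fun k _ => contDiff_const.mul (contDiffF 0 k)),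
      itd_sum (range (m+1)) _ (fun k _ => contDiff_const.mul (contDiffF (-1) k)),
      lemD 0 j n]
    congr 1
    · congr 1
      exact Finset.sum_congr rfl fun k _ => by
        rw [itd_cmul (b k) (contDiffF 0 k), lemD 0 j k]
    · exact Finset.sum_congr rfl fun k _ => by
        rw [itd_cmul (β k) (contDiffF (-1) k), lemD (-1) j k]
  -- factorial nonvanishing helper
  have fne : ∀ a : ℕ, ((a.factorial : ℕ) : ℂ) ≠ 0 :=
    fun a => Nat.cast_ne_zero.mpr (Nat.factorial_ne_zero a)
  constructor
  · intro j hj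
    rw [key j]
    have hA : (0:ℂ)^(j-n) * (j.choose n : ℂ) * (n.factorial : ℂ)
        = if j = n then (n.factorial : ℂ) else 0 := by
      rcases lt_trichotomy j n with h | h | h
      · rw [if_neg h.ne, Nat.choose_eq_zero_of_lt h]; simp
      · subst h; simp [Nat.sub_self]
      · rw [if_neg (by omega), zero_pow (by omega)]; ring
    have hB : (∑ k ∈ range n, b k * ((0:ℂ)^(j-k) * (j.choose k : ℂ) * (k.factorial : ℂ)))
        = if j < n then b j * (j.factorial : ℂ) else 0 := by
      rcases lt_or_ge j n with h | h
      · rw [if_pos h]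
        rw [Finset.sum_eq_single_of_mem j (Finset.mem_range.mpr h)]
        · simp [Nat.sub_self]
        · intro k hk hkj
          rcases lt_or_gt_of_ne hkj with h2 | h2
          · rw [zero_pow (by omega)]; ring
          · rw [Nat.choose_eq_zero_of_lt h2]; simp
      · rw [if_neg (by omega)]
        apply Finset.sum_eq_zero
        intro k hk
        rw [Finset.mem_range] at hk
        rw [zero_pow (by omega)]
        ring
    have hC : (∑ k ∈ range (m+1), β k * ((-1:ℂ)^(j-k) * (j.choose k : ℂ) * (k.factorial : ℂ)))
        = (-1:ℂ)^(n-1+j) * (((j.factorial : ℂ) * ((m+n-j).factorial : ℂ)) / (m.factorial : ℂ))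
          * ∑ k ∈ range (m+1), (-1:ℂ)^k * (m.choose k : ℂ) * (((m+n-k).choose (m+n-j) : ℕ) : ℂ) := by
      rw [Finset.mul_sum]
      apply Finset.sum_congr rfl
      intro k hk
      rw [Finset.mem_range, Nat.lt_succ_iff] at hk
      rw [hβ k]
      rcases le_or_gt k j with hkj | hkj
      · have sgn : (-1:ℂ)^(j-k) = (-1:ℂ)^j * (-1:ℂ)^k := sgn_sub hkj
        rw [sgn, Nat.cast_choose ℂ hkj, Nat.cast_choose ℂ hk,
          Nat.cast_choose ℂ (show m+n-j ≤ m+n-k by omega),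
          show (m+n-k)-(m+n-j) = j-k from by omega, pow_add]
        field_simp [fne k, fne (m-k), fne (j-k), fne m, fne j, fne (m+n-j), fne (m+n-k)]
      · rw [Nat.choose_eq_zero_of_lt hkj,
          Nat.choose_eq_zero_of_lt (show m+n-k < m+n-j by omega)]
        simp
    rw [hA, hB, hC, identI m (m+n) (m+n-j) (by omega)]
    rcases lt_trichotomy j n with hlt | heq | hgt
    · rw [if_neg (show ¬ j = n by omega), if_pos hlt, if_pos (show m ≤ m+n-j by omega)]
      rw [show (m+n) - m = n from by omega, show (m+n-j) - m = n - j from by omega]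
      rw [hb j]
      have sgn1 : (-1:ℂ)^(n-j) = (-1:ℂ)^n * (-1:ℂ)^j := sgn_sub (le_of_lt hlt)
      have sgn2 : (-1:ℂ)^n = (-1:ℂ)^(n-1) * (-1) := by
        rw [← pow_succ]
        congr 1
        omega
      rw [sgn1, sgn2, Nat.cast_choose ℂ (show m ≤ m+n-j by omega),
        show (m+n-j)-m = n-j from by omega,
        Nat.cast_choose ℂ (show n-j ≤ n by omega),
        show n-(n-j) = j from by omega, pow_add]
      field_simp [fne j, fne m, fne (n-j), fne (m+n-j), fne n]
      ring
    · rw [if_pos heq, if_neg (show ¬ j < n by omega), if_pos (show m ≤ m+n-j by omega), heq,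
        show (m+n) - m = n from by omega, show (m+n-n) - m = 0 from by omega,
        Nat.choose_zero_right, show m+n-n = m from by omega]
      have sgn2 : (-1:ℂ)^(n-1+n) = -1 := by
        rw [show n-1+n = 2*(n-1)+1 from by omega, pow_succ, pow_mul]
        norm_num
      rw [sgn2]
      field_simp [fne n, fne m]
      simp
    · rw [if_neg (show ¬ j = n by omega), if_neg (show ¬ j < n by omega),
        if_neg (show ¬ m ≤ m+n-j by omega)]
      ring
  · rw [key (m+n+1)]
    have hA : (0:ℂ)^(m+n+1-n) * ((m+n+1).choose n : ℂ) * (n.factorial : ℂ) = 0 := by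
      rw [zero_pow (by omega)]; ring
    have hB : (∑ k ∈ range n, b k * ((0:ℂ)^(m+n+1-k) * ((m+n+1).choose k : ℂ) * (k.factorial : ℂ)))
        = 0 := by
      apply Finset.sum_eq_zero
      intro k hk
      rw [Finset.mem_range] at hk
      rw [zero_pow (by omega)]
      ring
    have hC : (∑ k ∈ range (m+1), β k * ((-1:ℂ)^(m+n+1-k) * ((m+n+1).choose k : ℂ) * (k.factorial : ℂ)))
        = (-1:ℂ)^(n-1+(m+n+1)) * (((m+n+1).factorial : ℂ) / (m.factorial : ℂ))
          * ∑ k ∈ range (m+1), (-1:ℂ)^k * (m.choose k : ℂ) / ((m+n+1-k : ℕ) : ℂ) := by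
      rw [Finset.mul_sum]
      apply Finset.sum_congr rfl
      intro k hk
      rw [Finset.mem_range, Nat.lt_succ_iff] at hk
      rw [hβ k]
      have hkj : k ≤ m+n+1 := by omega
      have sgn : (-1:ℂ)^(m+n+1-k) = (-1:ℂ)^(m+n+1) * (-1:ℂ)^k := sgn_sub hkj
      have fF : (((m+n+1-k).factorial : ℕ) : ℂ)
          = ((m+n+1-k : ℕ) : ℂ) * ((m+n-k).factorial : ℂ) := by
        have h5 : m+n+1-k = (m+n-k)+1 := by omega
        rw [h5, Nat.factorial_succ]
        push_cast
        ring
      have hcne : ((m+n+1-k : ℕ) : ℂ) ≠ 0 := Nat.cast_ne_zero.mpr (by omega)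
      have hc1 : ((m+n-k : ℕ) : ℂ) + 1 ≠ 0 := by
        have : ((m+n-k : ℕ) : ℂ) + 1 = ((m+n-k+1 : ℕ) : ℂ) := by push_cast; ring
        rw [this]
        exact Nat.cast_ne_zero.mpr (by omega)
      have hc1' : (1:ℂ) + ((m+n-k : ℕ) : ℂ) ≠ 0 := by
        intro h; exact hc1 (by linear_combination h)
      rw [sgn, Nat.cast_choose ℂ hkj, Nat.cast_choose ℂ hk, fF,
        show m+n+1-k = (m+n-k)+1 from by omega, pow_add]
      field_simp [fne k, fne (m-k), fne m, fne (m+n-k), fne (m+n+1), hcne, hc1, hc1']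
      ring
    rw [hA, hB, hC]
    have hT : (∑ k ∈ range (m+1), (-1:ℂ)^k * (m.choose k : ℂ) / ((m+n+1-k : ℕ) : ℂ))
        = (-1:ℂ)^m * ((m.factorial : ℂ) / ∏ i ∈ range (m+1), ((n+1+i : ℕ) : ℂ)) := by
      rw [← Finset.sum_range_reflect
        (fun k => (-1:ℂ)^k * (m.choose k : ℂ) / ((m+n+1-k : ℕ) : ℂ)) (m+1)]
      rw [← identV m n, Finset.mul_sum]
      apply Finset.sum_congr rfl
      intro k hk
      rw [Finset.mem_range, Nat.lt_succ_iff] at hk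
      rw [show m+1-1-k = m-k from by omega]
      rw [Nat.choose_symm hk]
      rw [show m+n+1-(m-k) = n+1+k from by omega]
      rw [sgn_sub (show k ≤ m from hk)]
      ring
    rw [hT]
    have hprodne : (∏ i ∈ range (m+1), ((n+1+i : ℕ) : ℂ)) ≠ 0 := by
      rw [Finset.prod_ne_zero_iff]
      intro i _
      exact Nat.cast_ne_zero.mpr (by omega)
    simp only [zero_add]
    apply mul_ne_zero
    apply mul_ne_zero
    · exact pow_ne_zero _ (by norm_num)
    · exact div_ne_zero (fne _) (fne _)
    · exact mul_ne_zero (pow_ne_zero _ (by norm_num)) (div_ne_zero (fne _) hprodne)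
end

section
/- Let n ∈ ℕ, n ≥ 1, m ∈ ℕ with m ≤ n, and define for z ∈ ℂ: Δ̃(z) = z^n + ∑_{k=0}^{n-1} b_k z^k + e^{-z} ∑_{k=0}^{m} β_k z^k with b_k = (-1)^{n-k} (n!/k!) C(m+n-k, m) and β_k = (-1)^{n-1} (m+n-k)!/(k!(m-k)!). Then for every z ∈ ℂ, Δ̃(z) = (z^{m+n+1}/m!) ∫₀¹ t^m (1-t)^n e^{-zt} dt. -/
open Finset Polynomial

private lemma iterDerivEval (p : ℂ[X]) (r : ℂ) (j : ℕ) :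
    (Polynomial.derivative^[j] p).eval r = (j.factorial : ℂ) * (Polynomial.taylor r p).coeff j := by
  rw [Polynomial.taylor_coeff, ← Polynomial.factorial_smul_hasseDeriv]
  simp [nsmul_eq_mul]

private lemma one_sub_X_pow_coeff (n i : ℕ) (hi : i ≤ n) :
    (((1:ℂ[X]) - Polynomial.X) ^ n).coeff i = (-1 : ℂ) ^ i * (n.choose i : ℂ) := by
  have h : ((1:ℂ[X]) - Polynomial.X) ^ n
      = Polynomial.C ((-1:ℂ)^n) * (Polynomial.X + Polynomial.C (-1)) ^ n := by
    rw [map_pow, ← mul_pow]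
    congr 1
    simp
    ring
  rw [h, Polynomial.coeff_C_mul, Polynomial.coeff_X_add_C_pow]
  have hsplit : ((-1:ℂ))^n = (-1)^(n-i) * (-1)^i := by
    rw [← pow_add]; congr 1; omega
  have h2 : ((-1:ℂ))^(n-i) * (-1)^(n-i) = 1 := by
    rw [← pow_add]; exact Even.neg_one_pow ⟨n - i, rfl⟩
  rw [hsplit]
  linear_combination ((-1:ℂ)^i * (n.choose i : ℂ)) * h2

private lemma taylor_one_p (n m : ℕ) :
    Polynomial.taylor (1:ℂ) (((1:ℂ[X]) - Polynomial.X)^n * Polynomial.X^m)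
      = (Polynomial.C ((-1:ℂ)^n) * (Polynomial.X + 1)^m) * Polynomial.X^n := by
  rw [Polynomial.taylor_apply]
  simp only [Polynomial.mul_comp, Polynomial.pow_comp, Polynomial.sub_comp, Polynomial.one_comp,
    Polynomial.X_comp, Polynomial.C_1, map_pow, map_neg]
  rw [show (1:ℂ[X]) - (Polynomial.X + 1) = -Polynomial.X from by ring, neg_pow]
  ring

private lemma f_at_zero (n m k : ℕ) (hk : k ≤ n) :
    (Polynomial.derivative^[m+n-k] (((1:ℂ[X]) - Polynomial.X)^n * Polynomial.X^m)).eval 0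
      = ((m+n-k).factorial : ℂ) * ((-1:ℂ)^(n-k) * (n.choose k : ℂ)) := by
  rw [iterDerivEval, Polynomial.taylor_zero, Polynomial.coeff_mul_X_pow',
    if_pos (by omega : m ≤ m + n - k), show m + n - k - m = n - k from by omega,
    one_sub_X_pow_coeff n (n-k) (by omega), Nat.choose_symm hk]

private lemma f_at_zero2 (n m k : ℕ) (hk : n < k) (hk2 : k ≤ m + n) :
    (Polynomial.derivative^[m+n-k] (((1:ℂ[X]) - Polynomial.X)^n * Polynomial.X^m)).eval 0 = 0 := by
  rw [iterDerivEval, Polynomial.taylor_zero, Polynomial.coeff_mul_X_pow',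
    if_neg (by omega : ¬ m ≤ m + n - k), mul_zero]

private lemma f_at_one (n m k : ℕ) (hk : k ≤ m) :
    (Polynomial.derivative^[m+n-k] (((1:ℂ[X]) - Polynomial.X)^n * Polynomial.X^m)).eval 1
      = ((m+n-k).factorial : ℂ) * ((-1:ℂ)^n * (m.choose (m-k) : ℂ)) := by
  rw [iterDerivEval, taylor_one_p, Polynomial.coeff_mul_X_pow',
    if_pos (by omega : n ≤ m + n - k), show m + n - k - n = m - k from by omega,
    Polynomial.coeff_C_mul, Polynomial.coeff_X_add_one_pow]

private lemma f_at_one2 (n m k : ℕ) (hk : m < k) (hk2 : k ≤ m + n) :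
    (Polynomial.derivative^[m+n-k] (((1:ℂ[X]) - Polynomial.X)^n * Polynomial.X^m)).eval 1 = 0 := by
  rw [iterDerivEval, taylor_one_p, Polynomial.coeff_mul_X_pow',
    if_neg (by omega : ¬ n ≤ m + n - k), mul_zero]

theorem stmt_7 (n m : ℕ) (hn : 1 ≤ n) (hm : m ≤ n)
    (b : ℕ → ℂ) (β : ℕ → ℂ)
    (hb : ∀ k, b k = (-1 : ℂ) ^ (n - k) * ((n.factorial : ℂ) / (k.factorial : ℂ)) *
      ((m + n - k).choose m : ℂ))
    (hβ : ∀ k, β k = (-1 : ℂ) ^ (n - 1) * ((m + n - k).factorial : ℂ) /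
      ((k.factorial : ℂ) * ((m - k).factorial : ℂ)))
    (z : ℂ) :
    z ^ n + (∑ k ∈ Finset.range n, b k * z ^ k)
        + Complex.exp (-z) * ∑ k ∈ Finset.range (m + 1), β k * z ^ k =
      (z ^ (m + n + 1) / (m.factorial : ℂ)) *
        ∫ t in (0:ℝ)..1, (t : ℂ) ^ m * (1 - (t : ℂ)) ^ n * Complex.exp (-z * t) := by
  have hsign : (-1:ℂ)^n = -(-1:ℂ)^(n-1) := by
    conv_lhs => rw [show n = (n-1)+1 from by omega]
    rw [pow_succ]; ring
  rcases eq_or_ne z 0 with rfl | hz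
  · -- z = 0 case
    have h1 : ∑ k ∈ Finset.range n, b k * (0:ℂ)^k = b 0 := by
      rw [Finset.sum_eq_single_of_mem 0 (Finset.mem_range.2 hn)]
      · simp
      · intro k _ hk; simp [zero_pow hk]
    have h2 : ∑ k ∈ Finset.range (m+1), β k * (0:ℂ)^k = β 0 := by
      rw [Finset.sum_eq_single_of_mem 0 (Finset.mem_range.2 (Nat.succ_le_succ (Nat.zero_le m)))]
      · simp
      · intro k _ hk; simp [zero_pow hk]
    rw [h1, h2]
    simp only [neg_zero, Complex.exp_zero, one_mul, zero_pow (by omega : n ≠ 0),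
      zero_pow (by omega : m + n + 1 ≠ 0), zero_div, zero_mul, zero_add]
    rw [hb, hβ]
    have hc : ((m+n).choose m : ℂ) = ((m+n).factorial : ℂ) / (m.factorial * n.factorial) := by
      rw [Nat.cast_choose ℂ (Nat.le_add_right m n), show m + n - m = n from by omega]
    simp only [Nat.sub_zero, Nat.factorial_zero, Nat.cast_one, hc, hsign]
    have h3 : (m.factorial : ℂ) ≠ 0 := Nat.cast_ne_zero.2 (Nat.factorial_ne_zero m)
    have h4 : (n.factorial : ℂ) ≠ 0 := Nat.cast_ne_zero.2 (Nat.factorial_ne_zero n)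
    field_simp
    ring
  · -- main case
    set p : ℂ[X] := ((1:ℂ[X]) - Polynomial.X)^n * Polynomial.X^m with hp
    have hdegsub : ((1:ℂ[X]) - Polynomial.X).natDegree ≤ 1 :=
      le_trans (Polynomial.natDegree_sub_le _ _) (by simp)
    have hdeg : p.natDegree < m + n + 1 := by
      have h1 : (((1:ℂ[X]) - Polynomial.X)^n).natDegree ≤ n :=
        le_trans (Polynomial.natDegree_pow_le)
          (le_trans (Nat.mul_le_mul_left n hdegsub) (by simp))
      have h2 : p.natDegree ≤ (((1:ℂ[X]) - Polynomial.X)^n).natDegree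
          + (Polynomial.X^m : ℂ[X]).natDegree := Polynomial.natDegree_mul_le
      rw [Polynomial.natDegree_X_pow] at h2
      omega
    have hzero : Polynomial.derivative^[m+n+1] p = 0 :=
      Polynomial.iterate_derivative_eq_zero hdeg
    have hterm : ∀ (a : ℂ) (j : ℕ), z * (a / z^(j+1)) = a / z^j := by
      intro a j
      rw [pow_succ]
      field_simp
    -- the antiderivative
    have hF : ∀ w : ℂ, HasDerivAt
        (fun w => -(Complex.exp (-z*w) *
          ∑ j ∈ Finset.range (m+n+1), (Polynomial.derivative^[j] p).eval w / z^(j+1)))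
        (p.eval w * Complex.exp (-z*w)) w := by
      intro w
      have hexp : HasDerivAt (fun w : ℂ => Complex.exp (-z*w)) (Complex.exp (-z*w) * -z) w := by
        simpa using ((hasDerivAt_id w).const_mul (-z)).cexp
      have hsum : HasDerivAt
          (fun w : ℂ => ∑ j ∈ Finset.range (m+n+1), (Polynomial.derivative^[j] p).eval w / z^(j+1))
          (∑ j ∈ Finset.range (m+n+1), (Polynomial.derivative^[j+1] p).eval w / z^(j+1)) w := by
        apply HasDerivAt.fun_sum
        intro j _
        have h := (Polynomial.hasDerivAt (Polynomial.derivative^[j] p) w).div_const (z^(j+1))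
        simpa [Function.iterate_succ_apply'] using h
      have hprod := (hexp.mul hsum).neg
      refine hprod.congr_deriv (Eq.symm ?_)
      have tel : ∑ j ∈ Finset.range (m+n+1), ((Polynomial.derivative^[j] p).eval w / z^j
          - (Polynomial.derivative^[j+1] p).eval w / z^(j+1)) = p.eval w := by
        rw [Finset.sum_range_sub' fun j => (Polynomial.derivative^[j] p).eval w / z^j]
        simp [hzero]
      have hzs : z * ∑ j ∈ Finset.range (m+n+1), (Polynomial.derivative^[j] p).eval w / z^(j+1)
          = ∑ j ∈ Finset.range (m+n+1), (Polynomial.derivative^[j] p).eval w / z^j := by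
        rw [Finset.mul_sum]
        exact Finset.sum_congr rfl fun j _ => hterm _ j
      calc p.eval w * Complex.exp (-z*w)
          = Complex.exp (-z*w) * (∑ j ∈ Finset.range (m+n+1),
              ((Polynomial.derivative^[j] p).eval w / z^j
                - (Polynomial.derivative^[j+1] p).eval w / z^(j+1))) := by rw [tel]; ring
        _ = Complex.exp (-z*w) *
              ((z * ∑ j ∈ Finset.range (m+n+1), (Polynomial.derivative^[j] p).eval w / z^(j+1))
              - ∑ j ∈ Finset.range (m+n+1), (Polynomial.derivative^[j+1] p).eval w / z^(j+1)) := by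
            rw [hzs, Finset.sum_sub_distrib]
        _ = -(Complex.exp (-z*w) * -z *
              (∑ j ∈ Finset.range (m+n+1), (Polynomial.derivative^[j] p).eval w / z^(j+1))
            + Complex.exp (-z*w) *
              ∑ j ∈ Finset.range (m+n+1), (Polynomial.derivative^[j+1] p).eval w / z^(j+1)) := by
            ring
    have hcont : Continuous fun t : ℝ => p.eval (t:ℂ) * Complex.exp (-z*t) :=
      ((p.continuous).comp Complex.continuous_ofReal).mul
        (Complex.continuous_exp.comp (continuous_const.mul Complex.continuous_ofReal))
    have hint : (∫ t in (0:ℝ)..1, p.eval (t:ℂ) * Complex.exp (-z*t))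
        = (-(Complex.exp (-z*(1:ℝ)) *
            ∑ j ∈ Finset.range (m+n+1), (Polynomial.derivative^[j] p).eval ((1:ℝ):ℂ) / z^(j+1)))
          - (-(Complex.exp (-z*(0:ℝ)) *
            ∑ j ∈ Finset.range (m+n+1), (Polynomial.derivative^[j] p).eval ((0:ℝ):ℂ) / z^(j+1))) :=
      intervalIntegral.integral_eq_sub_of_hasDerivAt
        (fun t _ => (hF t).comp_ofReal) (hcont.intervalIntegrable 0 1)
    have hIeq : (∫ t in (0:ℝ)..1, (t:ℂ)^m * (1-(t:ℂ))^n * Complex.exp (-z*t))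
        = ∫ t in (0:ℝ)..1, p.eval (t:ℂ) * Complex.exp (-z*t) := by
      apply intervalIntegral.integral_congr
      intro t _
      simp only [hp, Polynomial.eval_mul, Polynomial.eval_pow, Polynomial.eval_sub,
        Polynomial.eval_one, Polynomial.eval_X]
      ring
    rw [hIeq, hint]
    push_cast
    rw [mul_one, mul_zero, Complex.exp_zero]
    have hm0 : (m.factorial : ℂ) ≠ 0 := Nat.cast_ne_zero.2 (Nat.factorial_ne_zero m)
    have hgen : ∀ c : ℂ, (z^(m+n+1)/(m.factorial:ℂ)) *
        ∑ j ∈ Finset.range (m+n+1), Polynomial.eval c (Polynomial.derivative^[j] p) / z^(j+1)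
      = ∑ k ∈ Finset.range (m+n+1),
          Polynomial.eval c (Polynomial.derivative^[m+n-k] p) / (m.factorial:ℂ) * z^k := by
      intro c
      calc (z^(m+n+1)/(m.factorial:ℂ)) *
          ∑ j ∈ Finset.range (m+n+1), Polynomial.eval c (Polynomial.derivative^[j] p) / z^(j+1)
          = ∑ j ∈ Finset.range (m+n+1),
              Polynomial.eval c (Polynomial.derivative^[j] p) / (m.factorial:ℂ) * z^(m+n-j) := by
            rw [Finset.mul_sum]
            refine Finset.sum_congr rfl fun j hj => ?_
            rw [Finset.mem_range] at hj
            have hzp : z^(m+n+1) = z^(j+1) * z^(m+n-j) := by rw [← pow_add]; congr 1; omega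
            have hzj : (z:ℂ)^(j+1) ≠ 0 := pow_ne_zero _ hz
            rw [hzp]
            field_simp
        _ = ∑ k ∈ Finset.range (m+n+1),
              Polynomial.eval c (Polynomial.derivative^[m+n-k] p) / (m.factorial:ℂ) * z^k := by
            rw [← Finset.sum_range_reflect]
            refine Finset.sum_congr rfl fun k hk => ?_
            rw [Finset.mem_range] at hk
            congr 2 <;> omega
    have e0 := hgen 0
    have e1 := hgen 1
    have hA : ∑ k ∈ Finset.range (m+n+1),
        Polynomial.eval 0 (Polynomial.derivative^[m+n-k] p) / (m.factorial:ℂ) * z^k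
        = z^n + ∑ k ∈ Finset.range n, b k * z^k := by
      have hsub : Finset.range (n+1) ⊆ Finset.range (m+n+1) :=
        Finset.range_subset_range.2 (by omega)
      have hvanish : ∀ k ∈ Finset.range (m+n+1), k ∉ Finset.range (n+1) →
          Polynomial.eval 0 (Polynomial.derivative^[m+n-k] p) / (m.factorial:ℂ) * z^k = 0 := by
        intro k hk hk'
        rw [Finset.mem_range] at hk
        rw [Finset.mem_range, not_lt] at hk'
        rw [hp, f_at_zero2 n m k (by omega) (by omega)]
        simp
      rw [← Finset.sum_subset hsub hvanish, Finset.sum_range_succ]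
      have hterm_n : Polynomial.eval 0 (Polynomial.derivative^[m+n-n] p) / (m.factorial:ℂ) * z^n
          = z^n := by
        rw [hp, f_at_zero n m n le_rfl]
        rw [show m + n - n = m from by omega]
        simp [Nat.choose_self, hm0, Nat.sub_self]
      rw [hterm_n, add_comm]
      congr 1
      refine Finset.sum_congr rfl fun k hk => ?_
      rw [Finset.mem_range] at hk
      rw [hp, f_at_zero n m k (le_of_lt hk), hb k]
      congr 1
      rw [Nat.cast_choose ℂ (by omega : k ≤ n), Nat.cast_choose ℂ (by omega : m ≤ m+n-k),
        show m + n - k - m = n - k from by omega]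
      have c1 : (k.factorial : ℂ) ≠ 0 := Nat.cast_ne_zero.2 (Nat.factorial_ne_zero k)
      have c2 : ((n-k).factorial : ℂ) ≠ 0 := Nat.cast_ne_zero.2 (Nat.factorial_ne_zero _)
      have c3 : (n.factorial : ℂ) ≠ 0 := Nat.cast_ne_zero.2 (Nat.factorial_ne_zero n)
      field_simp
    have hB : ∑ k ∈ Finset.range (m+n+1),
        Polynomial.eval 1 (Polynomial.derivative^[m+n-k] p) / (m.factorial:ℂ) * z^k
        = -∑ k ∈ Finset.range (m+1), β k * z^k := by
      have hsub : Finset.range (m+1) ⊆ Finset.range (m+n+1) :=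
        Finset.range_subset_range.2 (by omega)
      have hvanish : ∀ k ∈ Finset.range (m+n+1), k ∉ Finset.range (m+1) →
          Polynomial.eval 1 (Polynomial.derivative^[m+n-k] p) / (m.factorial:ℂ) * z^k = 0 := by
        intro k hk hk'
        rw [Finset.mem_range] at hk
        rw [Finset.mem_range, not_lt] at hk'
        rw [hp, f_at_one2 n m k (by omega) (by omega)]
        simp
      rw [← Finset.sum_subset hsub hvanish, ← Finset.sum_neg_distrib]
      refine Finset.sum_congr rfl fun k hk => ?_
      rw [Finset.mem_range] at hk
      rw [hp, f_at_one n m k (by omega), hβ k, ← neg_mul]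
      congr 1
      rw [Nat.cast_choose ℂ (by omega : m - k ≤ m), show m - (m - k) = k from by omega, hsign]
      have c1 : (k.factorial : ℂ) ≠ 0 := Nat.cast_ne_zero.2 (Nat.factorial_ne_zero k)
      have c2 : ((m-k).factorial : ℂ) ≠ 0 := Nat.cast_ne_zero.2 (Nat.factorial_ne_zero _)
      field_simp
    linear_combination Complex.exp (-z) * (e1.trans hB) - (e0.trans hA)
end

section
/- Let m ∈ ℕ, n ∈ ℕ with n ≥ 1, and let T be the (m+1)×(m+1) real matrix with entries T_{j,k} = (-1)^{n+j-k}/(n+j-k)! for 0 ≤ j,k ≤ m (where 1/(n+j-k)! is interpreted as 0 if n+j-k < 0). Then T is invertible, and det T = (-1)^{n(m+1)} · (∏_{k=0}^{m} k!) / (∏_{k=0}^{m} (n+k)!). -/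
open Finset Matrix Polynomial

private lemma prod_range_sub_eq_factorial (J : ℕ) :
    ∏ i ∈ Finset.range J, ((J : ℝ) - (i : ℝ)) = (J.factorial : ℝ) := by
  induction J with
  | zero => simp
  | succ J ih =>
      rw [Finset.prod_range_succ']
      have h1 : ∀ i ∈ Finset.range J, ((J + 1 : ℕ) : ℝ) - ((i + 1 : ℕ) : ℝ)
          = (J : ℝ) - (i : ℝ) := by intro i _; push_cast; ring
      rw [Finset.prod_congr rfl h1, ih]
      push_cast [Nat.factorial_succ]
      ring

private lemma prod_pairs_eq_factorial (N : ℕ) :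
    ∏ i : Fin N, ∏ j ∈ Finset.Ioi i, ((j : ℝ) - (i : ℝ)) =
      ∏ k ∈ Finset.range N, (k.factorial : ℝ) := by
  rw [Finset.prod_comm' (t' := Finset.univ) (s' := fun j => Finset.Iio j)
      (by intro i j; simp)]
  rw [← Fin.prod_univ_eq_prod_range (fun k => (k.factorial : ℝ))]
  refine Finset.prod_congr rfl fun j _ => ?_
  rw [← prod_range_sub_eq_factorial (j : ℕ)]
  refine Finset.prod_nbij (fun i => (i : ℕ)) ?_ ?_ ?_ ?_
  · intro i hi; simpa using (Finset.mem_Iio.mp hi)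
  · intro a _ b _ h; exact Fin.val_injective h
  · intro i hi
    simp only [Finset.coe_Iio, Set.mem_image] at *
    exact ⟨⟨i, lt_trans (Finset.mem_range.mp (by simpa using hi)) j.isLt⟩,
      by simpa [Fin.lt_iff_val_lt_val] using (Finset.mem_range.mp (by simpa using hi)), rfl⟩
  · intro i _; rfl

theorem stmt_8 (m n : ℕ) (hn : 1 ≤ n)
    (T : Matrix (Fin (m + 1)) (Fin (m + 1)) ℝ)
    (hT : ∀ j k : Fin (m + 1),
      T j k = if (k : ℕ) ≤ n + (j : ℕ) then
          (-1 : ℝ) ^ (n + (j : ℕ) - (k : ℕ)) / ((n + (j : ℕ) - (k : ℕ)).factorial : ℝ)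
        else 0) :
    IsUnit T.det ∧
      T.det = (-1 : ℝ) ^ (n * (m + 1)) *
        ((∏ k ∈ Finset.range (m + 1), (k.factorial : ℝ)) /
          (∏ k ∈ Finset.range (m + 1), ((n + k).factorial : ℝ))) := by
  set v : Fin (m + 1) → ℝ := fun j => ((n + (j : ℕ) : ℕ) : ℝ) with hv
  set D : Matrix (Fin (m + 1)) (Fin (m + 1)) ℝ :=
    Matrix.of (fun j k : Fin (m + 1) => (descPochhammer ℝ (k : ℕ)).eval (v j)) with hD
  have hDval : ∀ j k : Fin (m + 1),
      D j k = ((n + (j : ℕ)).descFactorial (k : ℕ) : ℝ) := by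
    intro j k
    simp only [hD, Matrix.of_apply, hv]
    exact descPochhammer_eval_eq_descFactorial ℝ _ _
  -- entrywise factorization
  have hTD : T = Matrix.of (fun j k : Fin (m + 1) =>
      ((-1 : ℝ) ^ n * (-1 : ℝ) ^ (j : ℕ) * (((n + (j : ℕ)).factorial : ℝ))⁻¹) *
        ((Matrix.of (fun j k : Fin (m + 1) => (-1 : ℝ) ^ (k : ℕ) * D j k)) j k)) := by
    ext j k
    rw [hT]
    simp only [Matrix.of_apply]
    rw [hDval]
    by_cases hk : (k : ℕ) ≤ n + (j : ℕ)
    · rw [if_pos hk]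
      have key : ((n + (j : ℕ)) - (k : ℕ)).factorial *
          ((n + (j : ℕ)).descFactorial (k : ℕ)) = (n + (j : ℕ)).factorial :=
        Nat.factorial_mul_descFactorial hk
      have keyR : (((n + (j : ℕ)) - (k : ℕ)).factorial : ℝ) *
          ((n + (j : ℕ)).descFactorial (k : ℕ) : ℝ) = ((n + (j : ℕ)).factorial : ℝ) := by
        exact_mod_cast congrArg (Nat.cast : ℕ → ℝ) key
      have hpow : (-1 : ℝ) ^ n * (-1 : ℝ) ^ (j : ℕ) * (-1 : ℝ) ^ (k : ℕ)
          = (-1 : ℝ) ^ (n + (j : ℕ) - (k : ℕ)) := by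
        rw [← pow_add, ← pow_add]
        have h2 : n + (j : ℕ) + (k : ℕ) = (n + (j : ℕ) - (k : ℕ)) + 2 * (k : ℕ) := by omega
        rw [h2, pow_add, pow_mul, neg_one_sq, one_pow, mul_one]
      have h1 : (((n + (j : ℕ)) - (k : ℕ)).factorial : ℝ) ≠ 0 := by
        exact_mod_cast (Nat.factorial_pos _).ne'
      have h2 : (((n + (j : ℕ)).factorial : ℝ)) ≠ 0 := by
        exact_mod_cast (Nat.factorial_pos _).ne'
      field_simp
      rw [← hpow]
      linear_combination (-((-1:ℝ)^n * (-1:ℝ)^(j:ℕ) * (-1:ℝ)^(k:ℕ))) * keyR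
    · rw [if_neg hk]
      have : (n + (j : ℕ)).descFactorial (k : ℕ) = 0 :=
        Nat.descFactorial_eq_zero_iff_lt.mpr (by omega)
      simp [this]
  -- determinant of D equals a Vandermonde determinant
  have hdetD : D.det = ∏ k ∈ Finset.range (m + 1), (k.factorial : ℝ) := by
    have h1 : (Matrix.vandermonde v).det = D.det :=
      Matrix.det_eval_matrixOfPolynomials_eq_det_vandermonde v
        (fun k => descPochhammer ℝ (k : ℕ))
        (fun i => descPochhammer_natDegree ℝ i) (fun i => monic_descPochhammer ℝ i)
    rw [← h1, Matrix.det_vandermonde]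
    rw [← prod_pairs_eq_factorial (m + 1)]
    refine Finset.prod_congr rfl fun i _ => Finset.prod_congr rfl fun j _ => ?_
    simp only [hv]; push_cast; ring
  -- compute det T
  have hsign : (∏ j : Fin (m + 1), (-1 : ℝ) ^ (j : ℕ)) *
      (∏ k : Fin (m + 1), (-1 : ℝ) ^ (k : ℕ)) = 1 := by
    rw [← Finset.prod_mul_distrib]
    refine Finset.prod_eq_one fun x _ => ?_
    rw [← sq, ← pow_mul, mul_comm, pow_mul, neg_one_sq, one_pow]
  have hdetT : T.det = (-1 : ℝ) ^ (n * (m + 1)) *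
      ((∏ k ∈ Finset.range (m + 1), (k.factorial : ℝ)) /
        (∏ k ∈ Finset.range (m + 1), ((n + k).factorial : ℝ))) := by
    rw [hTD, Matrix.det_mul_column, Matrix.det_mul_row, hdetD]
    rw [Finset.prod_mul_distrib, Finset.prod_mul_distrib]
    rw [Finset.prod_const, Finset.card_univ, Fintype.card_fin, ← pow_mul]
    rw [Finset.prod_inv_distrib]
    rw [Fin.prod_univ_eq_prod_range (fun j => ((n + j).factorial : ℝ))]
    rw [div_eq_mul_inv]
    linear_combination ((-1:ℝ)^(n*(m+1)) * (∏ k ∈ Finset.range (m+1), (k.factorial:ℝ)) *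
      (∏ k ∈ Finset.range (m+1), ((n+k).factorial:ℝ))⁻¹) * hsign
  refine ⟨?_, hdetT⟩
  rw [hdetT]
  refine isUnit_iff_ne_zero.mpr (mul_ne_zero (pow_ne_zero _ (by norm_num)) ?_)
  refine div_ne_zero ?_ ?_ <;>
    · refine Finset.prod_ne_zero_iff.mpr fun k _ => ?_
      exact_mod_cast (Nat.factorial_pos _).ne'
end

section
/- Let m, n ∈ ℕ with n ≥ 1. Define (m+1)×(m+1) matrices B, L, U by B_{j,k} = (-1)^{n+j-k} C(n+j, k), L_{j,k} = (-1)^{j-k} C(j,k), and U_{j,k} = (-1)^{n+j-k} C(n, k-j), for 0 ≤ j,k ≤ m, where C is the binomial coefficient (equal to 0 when the lower index is negative or exceeds the upper index). Then B = L·U. In particular, since L is lower triangular with diagonal entries 1 and U is upper triangular with diagonal entries (-1)^n, one has det B = (-1)^{n(m+1)}. -/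
open Finset

private lemma vand (j n k : ℕ) :
    ∑ i ∈ range (k + 1), j.choose i * n.choose (k - i) = (n + j).choose k := by
  have h : n + j = j + n := Nat.add_comm n j
  rw [h, Nat.add_choose_eq, Finset.Nat.sum_antidiagonal_eq_sum_range_succ_mk]

theorem stmt_9 (m n : ℕ) (hn : 1 ≤ n)
    (B L U : Matrix (Fin (m + 1)) (Fin (m + 1)) ℤ)
    (hB : ∀ j k : Fin (m + 1),
      B j k = (-1 : ℤ) ^ (n + (j : ℕ) - (k : ℕ)) * ((n + (j : ℕ)).choose (k : ℕ)))
    (hL : ∀ j k : Fin (m + 1),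
      L j k = (-1 : ℤ) ^ ((j : ℕ) - (k : ℕ)) * ((j : ℕ).choose (k : ℕ)))
    (hU : ∀ j k : Fin (m + 1),
      U j k = if (j : ℕ) ≤ (k : ℕ) then
          (-1 : ℤ) ^ (n + (j : ℕ) - (k : ℕ)) * (n.choose ((k : ℕ) - (j : ℕ)))
        else 0) :
    B = L * U ∧ B.det = (-1 : ℤ) ^ (n * (m + 1)) := by
  have hBLU : B = L * U := by
    ext j k
    rw [Matrix.mul_apply, hB]
    have hterm : ∀ i : Fin (m + 1), L j i * U i k =
        (-1 : ℤ) ^ (n + (j : ℕ) - (k : ℕ)) *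
          (if (i : ℕ) ≤ (k : ℕ) then
            ((j : ℕ).choose (i : ℕ) * n.choose ((k : ℕ) - (i : ℕ)) : ℤ) else 0) := by
      intro i
      rw [hL, hU]
      by_cases hik : (i : ℕ) ≤ (k : ℕ)
      · simp only [if_pos hik]
        by_cases hij : (i : ℕ) ≤ (j : ℕ)
        · by_cases hkn : (k : ℕ) ≤ n + (i : ℕ)
          · have he : ((j : ℕ) - (i : ℕ)) + (n + (i : ℕ) - (k : ℕ)) = n + (j : ℕ) - (k : ℕ) := by
              omega
            rw [← he, pow_add]
            ring
          · have : n.choose ((k : ℕ) - (i : ℕ)) = 0 := by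
              apply Nat.choose_eq_zero_of_lt; omega
            rw [this]
            push_cast
            ring
        · have : (j : ℕ).choose (i : ℕ) = 0 := by
            apply Nat.choose_eq_zero_of_lt; omega
          rw [this]
          push_cast
          ring
      · simp [hik]
    rw [Finset.sum_congr rfl (fun i _ => hterm i), ← Finset.mul_sum]
    symm
    congr 1
    have hk : (k : ℕ) < m + 1 := k.isLt
    calc (∑ i : Fin (m + 1), if (i : ℕ) ≤ (k : ℕ) then
            ((j : ℕ).choose (i : ℕ) * n.choose ((k : ℕ) - (i : ℕ)) : ℤ) else 0)
        = ∑ i ∈ range (m + 1), (if i ≤ (k : ℕ) then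
            ((j : ℕ).choose i * n.choose ((k : ℕ) - i) : ℤ) else 0) := by
          rw [Finset.sum_range fun i => if i ≤ (k : ℕ) then
            ((j : ℕ).choose i * n.choose ((k : ℕ) - i) : ℤ) else 0]
      _ = ∑ i ∈ range ((k : ℕ) + 1), ((j : ℕ).choose i * n.choose ((k : ℕ) - i) : ℤ) := by
          rw [← Finset.sum_filter]
          apply Finset.sum_congr
          · ext i
            simp only [mem_filter, mem_range]
            omega
          · intros; rfl
      _ = ((n + (j : ℕ)).choose (k : ℕ) : ℤ) := by
          rw [← vand (j : ℕ) n (k : ℕ)]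
          push_cast
          rfl
  refine ⟨hBLU, ?_⟩
  have hLdet : L.det = 1 := by
    have hLt : L.BlockTriangular OrderDual.toDual := by
      intro i k hik
      rw [hL]
      have : (i : ℕ) < (k : ℕ) := hik
      rw [Nat.choose_eq_zero_of_lt this]
      push_cast; ring
    rw [Matrix.det_of_lowerTriangular L hLt]
    have : ∀ i : Fin (m + 1), L i i = 1 := by
      intro i; rw [hL]; simp
    simp [this]
  have hUdet : U.det = (-1 : ℤ) ^ (n * (m + 1)) := by
    have hUt : U.BlockTriangular id := by
      intro i k hik
      rw [hU]
      have : ¬ ((i : ℕ) ≤ (k : ℕ)) := by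
        simp only [id] at hik
        exact Nat.not_le.mpr hik
      simp [this]
    rw [Matrix.det_of_upperTriangular hUt]
    have : ∀ i : Fin (m + 1), U i i = (-1 : ℤ) ^ n := by
      intro i; rw [hU]; simp
    rw [Finset.prod_congr rfl (fun i _ => this i)]
    simp [← pow_mul]
  rw [hBLU, Matrix.det_mul, hLdet, hUdet, one_mul]
end

section
/- Let s₀ = ξ + iω with ξ > 0 and suppose (s₀² - 4s₀ + 6)e^{s₀} = 2s₀ + 6. Then H_ξ(ω²) < 0, where H_ξ(Ω) = (1+2ξ)Ω² + 2(2ξ-7)ξ²Ω + (2ξ³ - 15ξ² + 48ξ - 72)ξ². -/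
theorem stmt_13 (ξ ω : ℝ) (hξ : 0 < ξ) (s₀ : ℂ)
    (hs₀ : s₀ = (ξ : ℂ) + Complex.I * ω)
    (heq : (s₀ ^ 2 - 4 * s₀ + 6) * Complex.exp s₀ = 2 * s₀ + 6) :
    (1 + 2 * ξ) * (ω ^ 2) ^ 2 + 2 * (2 * ξ - 7) * ξ ^ 2 * ω ^ 2 +
        (2 * ξ ^ 3 - 15 * ξ ^ 2 + 48 * ξ - 72) * ξ ^ 2 < 0 := by
  set P : ℂ := s₀ ^ 2 - 4 * s₀ + 6 with hP
  have hne : P ≠ 0 := by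
    intro h
    rw [h, zero_mul] at heq
    have hs : s₀ = -3 := by
      have : 2 * s₀ + 6 = 0 := heq.symm
      linear_combination this / 2
    rw [hs₀] at hs
    have := congrArg Complex.re hs
    simp at this
    linarith
  have hre : s₀.re = ξ := by rw [hs₀]; simp
  have habs' : ‖P‖ * Real.exp ξ = ‖2 * s₀ + 6‖ := by
    have h := congrArg (‖·‖) heq
    rwa [norm_mul, Complex.norm_exp, hre] at h
  -- squared version
  have hsq : Complex.normSq P * Real.exp (2 * ξ) = Complex.normSq (2 * s₀ + 6) := by
    have h1 := congrArg (· ^ 2) habs'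
    simp only [mul_pow] at h1
    rw [Complex.sq_norm, Complex.sq_norm, ← Real.exp_nat_mul] at h1
    convert h1 using 3
    norm_num
  have hP2 : Complex.normSq P = (ξ^2 - ω^2 - 4*ξ + 6)^2 + (2*ξ*ω - 4*ω)^2 := by
    rw [hP, hs₀, Complex.normSq_apply]
    simp [Complex.add_re, Complex.add_im, Complex.mul_re, Complex.mul_im, pow_two]
    ring
  have hQ2 : Complex.normSq (2 * s₀ + 6) = 4 * ((ξ + 3)^2 + ω^2) := by
    rw [hs₀, Complex.normSq_apply]
    simp [Complex.add_re, Complex.add_im, Complex.mul_re, Complex.mul_im]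
    ring
  have hPpos : 0 < Complex.normSq P := by
    rcases (Complex.normSq_pos).mpr hne with h
    exact h
  have hexp : (1 : ℝ) + 2 * ξ < Real.exp (2 * ξ) := by
    have := Real.add_one_lt_exp (x := 2 * ξ) (by positivity)
    linarith
  have key : Complex.normSq P * (1 + 2 * ξ) < Complex.normSq (2 * s₀ + 6) := by
    calc Complex.normSq P * (1 + 2 * ξ) < Complex.normSq P * Real.exp (2 * ξ) := by
          exact (mul_lt_mul_iff_right₀ hPpos).mpr hexp
      _ = _ := hsq
  rw [hP2, hQ2] at key
  nlinarith [key, sq_nonneg ω, sq_nonneg ξ]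
end

section
/- For every ξ ∈ (0, 3(1+√2)/2), the real number Ω₊ = ξ(7ξ - 2ξ² + 2√(-8ξ² + 24ξ + 18))/(1 + 2ξ) satisfies Ω₊ ≤ ξ(-2ξ² + 7ξ + 12)/(1 + 2ξ) < π². -/
theorem stmt_14 (ξ : ℝ) (h0 : 0 < ξ) (h1 : ξ < 3 * (1 + Real.sqrt 2) / 2) :
    ξ * (7 * ξ - 2 * ξ ^ 2 + 2 * Real.sqrt (-8 * ξ ^ 2 + 24 * ξ + 18)) / (1 + 2 * ξ) ≤
        ξ * (-2 * ξ ^ 2 + 7 * ξ + 12) / (1 + 2 * ξ) ∧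
      ξ * (-2 * ξ ^ 2 + 7 * ξ + 12) / (1 + 2 * ξ) < Real.pi ^ 2 := by
  have hd : (0:ℝ) < 1 + 2 * ξ := by linarith
  constructor
  · gcongr ?_ / _
    have hs : Real.sqrt (-8 * ξ ^ 2 + 24 * ξ + 18) ≤ 6 := by
      rw [show (6:ℝ) = Real.sqrt 36 by
        rw [show (36:ℝ) = 6^2 by norm_num, Real.sqrt_sq (by norm_num)]]
      apply Real.sqrt_le_sqrt
      nlinarith [sq_nonneg (2*ξ - 3)]
    nlinarith
  · rw [div_lt_iff₀ hd]
    have hpi : Real.pi > 3.14 := by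
      have := Real.pi_gt_d6; linarith
    have hpi2 : Real.pi ^ 2 > 9.8 := by nlinarith
    nlinarith [mul_nonneg h0.le (sq_nonneg (ξ - 1.5)), sq_nonneg (ξ - 1.5)]
end

section
/- Let n ∈ ℕ, n ≥ 1, and define Δ̃(z) = ∑_{k=0}^{n} (-1)^{n-k} ((2n-k)!/(k!(n-k)!)) z^k + e^{-z} ∑_{k=0}^{n} (-1)^{n-1} ((2n-k)!/(k!(n-k)!)) z^k. Then for ζ ∈ ℝ, Δ̃(iζ) = 0 if and only if sin(ζ/2) ∑_{ℓ=0}^{⌊n/2⌋} (-1)^ℓ ((2n-2ℓ)!/((2ℓ)!(n-2ℓ)!)) ζ^{2ℓ} = ζ cos(ζ/2) ∑_{ℓ=0}^{⌊(n-1)/2⌋} (-1)^ℓ ((2n-2ℓ-1)!/((2ℓ+1)!(n-2ℓ-1)!)) ζ^{2ℓ}. -/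
open Finset

private lemma sum_split {M : Type*} [AddCommMonoid M] (f : ℕ → M) (m : ℕ) :
    ∑ k ∈ Finset.range m, f k =
      ∑ ℓ ∈ Finset.range ((m+1)/2), f (2*ℓ) + ∑ ℓ ∈ Finset.range (m/2), f (2*ℓ+1) := by
  induction m with
  | zero => simp
  | succ m ih =>
    rw [Finset.sum_range_succ, ih]
    rcases Nat.even_or_odd m with ⟨t, ht⟩ | ⟨t, ht⟩
    · have h1 : (m+1)/2 = t := by omega
      have h2 : m/2 = t := by omega
      have h3 : (m+1+1)/2 = t+1 := by omega
      rw [h1, h2, h3, Finset.sum_range_succ]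
      have h4 : 2*t = m := by omega
      rw [h4]; abel
    · have h1 : (m+1)/2 = t+1 := by omega
      have h2 : m/2 = t := by omega
      have h3 : (m+1+1)/2 = t+1 := by omega
      rw [h1, h2, h3, Finset.sum_range_succ (fun ℓ => f (2*ℓ+1))]
      have h4 : 2*t+1 = m := by omega
      rw [h4]; abel

private lemma neg_one_pow_sub' (n k : ℕ) (h : k ≤ n) :
    (-1 : ℂ) ^ (n - k) = (-1) ^ n * (-1) ^ k := by
  conv_rhs => rw [← Nat.sub_add_cancel h, pow_add]
  rw [mul_assoc, ← sq, ← pow_mul, mul_comm k 2, pow_mul, neg_one_sq, one_pow, mul_one]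

theorem stmt_16 (n : ℕ) (hn : 1 ≤ n) (Δ : ℂ → ℂ)
    (hΔ : ∀ z : ℂ, Δ z =
      (∑ k ∈ Finset.range (n + 1),
        (-1 : ℂ) ^ (n - k) * (((2 * n - k).factorial : ℂ) /
          ((k.factorial : ℂ) * ((n - k).factorial : ℂ))) * z ^ k)
      + Complex.exp (-z) *
        ∑ k ∈ Finset.range (n + 1),
          (-1 : ℂ) ^ (n - 1) * (((2 * n - k).factorial : ℂ) /
            ((k.factorial : ℂ) * ((n - k).factorial : ℂ))) * z ^ k)
    (ζ : ℝ) :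
    Δ (Complex.I * ζ) = 0 ↔
      Real.sin (ζ / 2) *
          ∑ ℓ ∈ Finset.range (n / 2 + 1),
            (-1 : ℝ) ^ ℓ * (((2 * n - 2 * ℓ).factorial : ℝ) /
              (((2 * ℓ).factorial : ℝ) * ((n - 2 * ℓ).factorial : ℝ))) * ζ ^ (2 * ℓ) =
        ζ * Real.cos (ζ / 2) *
          ∑ ℓ ∈ Finset.range ((n - 1) / 2 + 1),
            (-1 : ℝ) ^ ℓ * (((2 * n - 2 * ℓ - 1).factorial : ℝ) /
              (((2 * ℓ + 1).factorial : ℝ) * ((n - 2 * ℓ - 1).factorial : ℝ))) * ζ ^ (2 * ℓ) := by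
  set A : ℝ := ∑ ℓ ∈ Finset.range (n / 2 + 1),
            (-1 : ℝ) ^ ℓ * (((2 * n - 2 * ℓ).factorial : ℝ) /
              (((2 * ℓ).factorial : ℝ) * ((n - 2 * ℓ).factorial : ℝ))) * ζ ^ (2 * ℓ) with hA_def
  set B : ℝ := ∑ ℓ ∈ Finset.range ((n - 1) / 2 + 1),
            (-1 : ℝ) ^ ℓ * (((2 * n - 2 * ℓ - 1).factorial : ℝ) /
              (((2 * ℓ + 1).factorial : ℝ) * ((n - 2 * ℓ - 1).factorial : ℝ))) * ζ ^ (2 * ℓ) with hB_def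
  -- complex versions of A and B
  have hAc : ((A : ℝ) : ℂ) = ∑ ℓ ∈ Finset.range (n / 2 + 1),
      (-1 : ℂ) ^ ℓ * (((2 * n - 2 * ℓ).factorial : ℂ) /
        (((2 * ℓ).factorial : ℂ) * ((n - 2 * ℓ).factorial : ℂ))) * (ζ : ℂ) ^ (2 * ℓ) := by
    rw [hA_def, Complex.ofReal_sum]
    exact Finset.sum_congr rfl fun ℓ _ => by push_cast; ring
  have hBc : ((B : ℝ) : ℂ) = ∑ ℓ ∈ Finset.range ((n - 1) / 2 + 1),
      (-1 : ℂ) ^ ℓ * (((2 * n - 2 * ℓ - 1).factorial : ℂ) /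
        (((2 * ℓ + 1).factorial : ℂ) * ((n - 2 * ℓ - 1).factorial : ℂ))) * (ζ : ℂ) ^ (2 * ℓ) := by
    rw [hB_def, Complex.ofReal_sum]
    exact Finset.sum_congr rfl fun ℓ _ => by push_cast; ring
  have hIpow : ∀ ℓ : ℕ, (Complex.I * (ζ : ℂ)) ^ (2 * ℓ) = (-1 : ℂ) ^ ℓ * (ζ : ℂ) ^ (2 * ℓ) := by
    intro ℓ
    rw [pow_mul, mul_pow, Complex.I_sq, pow_mul]
    rw [show (-1 * (ζ:ℂ)^2 : ℂ) = (-1) * (ζ:ℂ)^2 from rfl, mul_pow]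
  have e1 : (n+1+1)/2 = n/2 + 1 := by omega
  have e2 : (n+1)/2 = (n-1)/2 + 1 := by omega
  have key : (∑ k ∈ Finset.range (n + 1),
        (-1 : ℂ) ^ (n - k) * (((2 * n - k).factorial : ℂ) /
          ((k.factorial : ℂ) * ((n - k).factorial : ℂ))) * (Complex.I * (ζ:ℂ)) ^ k)
      = (-1:ℂ)^n * ((A : ℂ) - Complex.I * (ζ:ℂ) * (B : ℂ)) := by
    rw [sum_split _ (n+1), e1, e2]
    have heven : ∀ ℓ ∈ Finset.range (n/2 + 1),
        (-1 : ℂ) ^ (n - 2*ℓ) * (((2 * n - 2*ℓ).factorial : ℂ) /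
          (((2*ℓ).factorial : ℂ) * ((n - 2*ℓ).factorial : ℂ))) * (Complex.I * (ζ:ℂ)) ^ (2*ℓ)
        = (-1:ℂ)^n * ((-1 : ℂ) ^ ℓ * (((2 * n - 2 * ℓ).factorial : ℂ) /
        (((2 * ℓ).factorial : ℂ) * ((n - 2 * ℓ).factorial : ℂ))) * (ζ : ℂ) ^ (2 * ℓ)) := by
      intro ℓ hℓ
      have hb : 2*ℓ ≤ n := by simp [Finset.mem_range] at hℓ; omega
      rw [neg_one_pow_sub' n (2*ℓ) hb, hIpow, pow_mul, neg_one_sq, one_pow]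
      ring
    have hodd : ∀ ℓ ∈ Finset.range ((n-1)/2 + 1),
        (-1 : ℂ) ^ (n - (2*ℓ+1)) * (((2 * n - (2*ℓ+1)).factorial : ℂ) /
          (((2*ℓ+1).factorial : ℂ) * ((n - (2*ℓ+1)).factorial : ℂ))) * (Complex.I * (ζ:ℂ)) ^ (2*ℓ+1)
        = (-((-1:ℂ)^n) * (Complex.I * (ζ:ℂ))) * ((-1 : ℂ) ^ ℓ * (((2 * n - 2 * ℓ - 1).factorial : ℂ) /
        (((2 * ℓ + 1).factorial : ℂ) * ((n - 2 * ℓ - 1).factorial : ℂ))) * (ζ : ℂ) ^ (2 * ℓ)) := by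
      intro ℓ hℓ
      have hb : 2*ℓ+1 ≤ n := by simp [Finset.mem_range] at hℓ; omega
      rw [neg_one_pow_sub' n (2*ℓ+1) hb, pow_succ (Complex.I * (ζ:ℂ)), hIpow,
        pow_succ, pow_mul (-1:ℂ), neg_one_sq, one_pow,
        show 2*n - (2*ℓ+1) = 2*n - 2*ℓ - 1 from by omega,
        show n - (2*ℓ+1) = n - 2*ℓ - 1 from by omega]
      ring
    rw [Finset.sum_congr rfl heven, Finset.sum_congr rfl hodd, ← Finset.mul_sum,
      ← Finset.mul_sum, hAc, hBc]
    ring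
  have key2 : (∑ k ∈ Finset.range (n + 1),
        (-1 : ℂ) ^ (n - 1) * (((2 * n - k).factorial : ℂ) /
          ((k.factorial : ℂ) * ((n - k).factorial : ℂ))) * (Complex.I * (ζ:ℂ)) ^ k)
      = -((-1:ℂ)^n) * ((A : ℂ) + Complex.I * (ζ:ℂ) * (B : ℂ)) := by
    have hs : (-1 : ℂ) ^ (n - 1) = -((-1:ℂ)^n) := by
      rw [neg_one_pow_sub' n 1 hn]; ring
    rw [sum_split _ (n+1), e1, e2]
    have heven : ∀ ℓ ∈ Finset.range (n/2 + 1),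
        (-1 : ℂ) ^ (n - 1) * (((2 * n - 2*ℓ).factorial : ℂ) /
          (((2*ℓ).factorial : ℂ) * ((n - 2*ℓ).factorial : ℂ))) * (Complex.I * (ζ:ℂ)) ^ (2*ℓ)
        = (-((-1:ℂ)^n)) * ((-1 : ℂ) ^ ℓ * (((2 * n - 2 * ℓ).factorial : ℂ) /
        (((2 * ℓ).factorial : ℂ) * ((n - 2 * ℓ).factorial : ℂ))) * (ζ : ℂ) ^ (2 * ℓ)) := by
      intro ℓ _
      rw [hs, hIpow]; ring
    have hodd : ∀ ℓ ∈ Finset.range ((n-1)/2 + 1),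
        (-1 : ℂ) ^ (n - 1) * (((2 * n - (2*ℓ+1)).factorial : ℂ) /
          (((2*ℓ+1).factorial : ℂ) * ((n - (2*ℓ+1)).factorial : ℂ))) * (Complex.I * (ζ:ℂ)) ^ (2*ℓ+1)
        = (-((-1:ℂ)^n) * (Complex.I * (ζ:ℂ))) * ((-1 : ℂ) ^ ℓ * (((2 * n - 2 * ℓ - 1).factorial : ℂ) /
        (((2 * ℓ + 1).factorial : ℂ) * ((n - 2 * ℓ - 1).factorial : ℂ))) * (ζ : ℂ) ^ (2 * ℓ)) := by
      intro ℓ _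
      rw [hs, pow_succ (Complex.I * (ζ:ℂ)), hIpow,
        show 2*n - (2*ℓ+1) = 2*n - 2*ℓ - 1 from by omega,
        show n - (2*ℓ+1) = n - 2*ℓ - 1 from by omega]
      ring
    rw [Finset.sum_congr rfl heven, Finset.sum_congr rfl hodd, ← Finset.mul_sum,
      ← Finset.mul_sum, hAc, hBc]
    ring
  -- trig setup
  set cc : ℂ := ((Real.cos (ζ/2) : ℝ) : ℂ) with hcc
  set ss : ℂ := ((Real.sin (ζ/2) : ℝ) : ℂ) with hss
  have hsc : ss^2 + cc^2 = 1 := by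
    rw [hcc, hss]
    exact_mod_cast Real.sin_sq_add_cos_sq (ζ/2)
  have huv : (cc + ss*Complex.I) * (cc - ss*Complex.I) = 1 := by
    linear_combination hsc - ss^2 * Complex.I_sq
  have hu0 : (cc + ss*Complex.I) ≠ 0 := by
    intro h
    rw [h, zero_mul] at huv
    exact zero_ne_one huv
  have hE : Complex.exp (Complex.I * (ζ:ℂ) / 2) = cc + ss*Complex.I := by
    rw [show Complex.I * (ζ:ℂ) / 2 = ((ζ/2 : ℝ) : ℂ) * Complex.I from by push_cast; ring,
      Complex.exp_mul_I, ← Complex.ofReal_cos, ← Complex.ofReal_sin]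
  have h1 : Complex.exp (-(Complex.I * (ζ:ℂ))) * ((cc + ss*Complex.I) * (cc + ss*Complex.I)) = 1 := by
    rw [← hE, ← Complex.exp_add, ← Complex.exp_add,
      show -(Complex.I * (ζ:ℂ)) + (Complex.I * (ζ:ℂ) / 2 + Complex.I * (ζ:ℂ) / 2) = 0 from by ring,
      Complex.exp_zero]
  have heu : Complex.exp (-(Complex.I * (ζ:ℂ))) * (cc + ss*Complex.I) = cc - ss*Complex.I := by
    apply mul_left_cancel₀ hu0
    calc (cc + ss*Complex.I) * (Complex.exp (-(Complex.I * (ζ:ℂ))) * (cc + ss*Complex.I))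
        = Complex.exp (-(Complex.I * (ζ:ℂ))) * ((cc + ss*Complex.I) * (cc + ss*Complex.I)) := by ring
      _ = 1 := h1
      _ = (cc + ss*Complex.I) * (cc - ss*Complex.I) := huv.symm
  rw [hΔ, key, key2]
  constructor
  · intro h
    have hne : ((-1:ℂ)^n) ≠ 0 := pow_ne_zero _ (by norm_num)
    have h2 : ((A:ℂ) - Complex.I*(ζ:ℂ)*(B:ℂ)) - Complex.exp (-(Complex.I * (ζ:ℂ))) * ((A:ℂ) + Complex.I*(ζ:ℂ)*(B:ℂ)) = 0 := by
      have h' : (-1:ℂ)^n * (((A:ℂ) - Complex.I*(ζ:ℂ)*(B:ℂ)) - Complex.exp (-(Complex.I * (ζ:ℂ))) * ((A:ℂ) + Complex.I*(ζ:ℂ)*(B:ℂ))) = 0 := by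
        linear_combination h
      exact (mul_eq_zero.mp h').resolve_left hne
    have h3 : (cc + ss*Complex.I)*((A:ℂ) - Complex.I*(ζ:ℂ)*(B:ℂ)) - (cc - ss*Complex.I)*((A:ℂ) + Complex.I*(ζ:ℂ)*(B:ℂ)) = 0 := by
      linear_combination (cc + ss*Complex.I) * h2 + ((A:ℂ) + Complex.I*(ζ:ℂ)*(B:ℂ)) * heu
    have h5 : (2*Complex.I)*(ss*(A:ℂ) - (ζ:ℂ)*cc*(B:ℂ)) = 0 := by linear_combination h3
    have h6 : ss*(A:ℂ) - (ζ:ℂ)*cc*(B:ℂ) = 0 := by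
      have h2I : (2*Complex.I : ℂ) ≠ 0 := by simp [Complex.I_ne_zero]
      exact (mul_eq_zero.mp h5).resolve_left h2I
    rw [hcc, hss] at h6
    have h8 : Real.sin (ζ/2) * A - ζ * Real.cos (ζ/2) * B = 0 := by exact_mod_cast h6
    linarith
  · intro h
    have h6 : ss*(A:ℂ) - (ζ:ℂ)*cc*(B:ℂ) = 0 := by
      rw [hcc, hss]
      have h8 : Real.sin (ζ/2) * A - ζ * Real.cos (ζ/2) * B = 0 := by linarith
      exact_mod_cast congrArg (fun x : ℝ => (x : ℂ)) h8
    have h3 : (cc + ss*Complex.I)*((A:ℂ) - Complex.I*(ζ:ℂ)*(B:ℂ)) - (cc - ss*Complex.I)*((A:ℂ) + Complex.I*(ζ:ℂ)*(B:ℂ)) = 0 := by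
      linear_combination 2*Complex.I*h6
    have h2 : ((A:ℂ) - Complex.I*(ζ:ℂ)*(B:ℂ)) - Complex.exp (-(Complex.I * (ζ:ℂ))) * ((A:ℂ) + Complex.I*(ζ:ℂ)*(B:ℂ)) = 0 := by
      have h9 : (cc + ss*Complex.I) * (((A:ℂ) - Complex.I*(ζ:ℂ)*(B:ℂ)) - Complex.exp (-(Complex.I * (ζ:ℂ))) * ((A:ℂ) + Complex.I*(ζ:ℂ)*(B:ℂ))) = 0 := by
        linear_combination h3 - ((A:ℂ) + Complex.I*(ζ:ℂ)*(B:ℂ)) * heu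
      exact (mul_eq_zero.mp h9).resolve_left hu0
    linear_combination ((-1:ℂ)^n) * h2
end

section
/- Let f: [0,1] → ℝ be positive and continuously differentiable with f'(t) < 0 for all t ∈ [0,1], and define F(s) = ∫₀¹ e^{st} f(t) dt for s ∈ ℂ. If s ∈ ℂ satisfies F(s) = 0, then Re(s) > 0. -/
open Set Complex intervalIntegral Real

theorem stmt_19 (f : ℝ → ℝ)
    (hpos : ∀ t ∈ Set.Icc (0:ℝ) 1, 0 < f t)
    (hdiff : ContDiffOn ℝ 1 f (Set.Icc (0:ℝ) 1))
    (hder : ∀ t ∈ Set.Icc (0:ℝ) 1, derivWithin f (Set.Icc (0:ℝ) 1) t < 0)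
    (s : ℂ)
    (hF : (∫ t in (0:ℝ)..1, Complex.exp (s * t) * (f t : ℂ)) = 0) :
    0 < s.re := by
  by_contra hre
  push_neg at hre
  have hK : UniqueDiffOn ℝ (Icc (0:ℝ) 1) := uniqueDiffOn_Icc one_pos
  set g : ℝ → ℝ := fun t => derivWithin f (Icc (0:ℝ) 1) t with hgdef
  have hgc : ContinuousOn g (Icc 0 1) := hdiff.continuousOn_derivWithin hK le_rfl
  have hfc : ContinuousOn f (Icc 0 1) := hdiff.continuousOn
  have huIcc : Set.uIcc (0:ℝ) 1 = Set.Icc 0 1 := Set.uIcc_of_le zero_le_one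
  have hderiv : ∀ t ∈ Ioo (0:ℝ) 1, HasDerivAt f (g t) t := by
    intro t ht
    have hmem : Icc (0:ℝ) 1 ∈ nhds t := Icc_mem_nhds ht.1 ht.2
    have hd := (hdiff.differentiableOn one_ne_zero t (Ioo_subset_Icc_self ht)).differentiableAt hmem
    have hg : g t = deriv f t := derivWithin_of_mem_nhds hmem
    rw [hg]; exact hd.hasDerivAt
  -- case s = 0
  rcases eq_or_ne s 0 with rfl | hs0
  · have hposint : (0:ℝ) < ∫ t in (0:ℝ)..1, f t := by
      apply intervalIntegral.intervalIntegral_pos_of_pos_on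
      · rw [← huIcc] at hfc; exact hfc.intervalIntegrable
      · exact fun x hx => hpos x (Ioo_subset_Icc_self hx)
      · exact zero_lt_one
    have h1 : ((∫ t in (0:ℝ)..1, f t : ℝ) : ℂ) = 0 := by
      rw [← intervalIntegral.integral_ofReal]
      simpa using hF
    exact absurd (Complex.ofReal_eq_zero.mp h1) hposint.ne'
  -- continuity facts
  have hce : Continuous fun t : ℝ => Complex.exp (s * t) :=
    Complex.continuous_exp.comp (continuous_const.mul Complex.continuous_ofReal)
  have hgcC : ContinuousOn (fun t => ((g t : ℂ))) (Icc (0:ℝ) 1) :=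
    Complex.continuous_ofReal.comp_continuousOn hgc
  have hfcC : ContinuousOn (fun t => ((f t : ℂ))) (Icc (0:ℝ) 1) :=
    Complex.continuous_ofReal.comp_continuousOn hfc
  -- complex FTC / integration by parts
  have key : (∫ t in (0:ℝ)..1, Complex.exp (s * t) * (g t : ℂ))
      = Complex.exp s * (f 1 : ℂ) - (f 0 : ℂ) := by
    have hu : ∀ t ∈ Ioo (0:ℝ) 1, HasDerivAt (fun t : ℝ => Complex.exp (s * t) * (f t : ℂ))
        (s * (Complex.exp (s * t) * (f t : ℂ)) + Complex.exp (s * t) * (g t : ℂ)) t := by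
      intro t ht
      have h1 : HasDerivAt (fun t : ℝ => Complex.exp (s * t)) (Complex.exp (s * t) * s) t := by
        have h0 : HasDerivAt (fun t : ℝ => s * (t : ℂ)) s t := by
          simpa using ((hasDerivAt_id t).ofReal_comp (z := t)).const_mul s
        exact h0.cexp
      have h2 : HasDerivAt (fun t : ℝ => ((f t : ℂ))) ((g t : ℂ)) t :=
        (hderiv t ht).ofReal_comp
      convert h1.mul h2 using 1
      · rfl
      · rfl
      · ring
    have hintφ : IntervalIntegrable
        (fun t => s * (Complex.exp (s * t) * (f t : ℂ)) + Complex.exp (s * t) * (g t : ℂ))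
        MeasureTheory.volume 0 1 := by
      apply ContinuousOn.intervalIntegrable
      rw [huIcc]
      exact ((hce.continuousOn.mul hfcC).const_smul s).add (hce.continuousOn.mul hgcC)
    have hftc := intervalIntegral.integral_eq_sub_of_hasDeriv_right_of_le zero_le_one
      (hce.continuousOn.mul hfcC) (fun t ht => (hu t ht).hasDerivWithinAt) hintφ
    have hsplit : (∫ t in (0:ℝ)..1,
        (s * (Complex.exp (s * t) * (f t : ℂ)) + Complex.exp (s * t) * (g t : ℂ)))
        = s * (∫ t in (0:ℝ)..1, Complex.exp (s * t) * (f t : ℂ))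
          + ∫ t in (0:ℝ)..1, Complex.exp (s * t) * (g t : ℂ) := by
      rw [intervalIntegral.integral_add, intervalIntegral.integral_const_mul]
      · apply ContinuousOn.intervalIntegrable
        rw [huIcc]
        exact (hce.continuousOn.mul hfcC).const_smul s
      · apply ContinuousOn.intervalIntegrable
        rw [huIcc]
        exact hce.continuousOn.mul hgcC
    rw [hsplit, hF, mul_zero, zero_add] at hftc
    rw [hftc]
    norm_num
  -- real FTC
  have hreal : (∫ t in (0:ℝ)..1, g t) = f 1 - f 0 := by
    apply intervalIntegral.integral_eq_sub_of_hasDeriv_right_of_le zero_le_one hfc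
      (fun t ht => (hderiv t ht).hasDerivWithinAt)
    apply ContinuousOn.intervalIntegrable
    rwa [huIcc]
  -- f strictly decreasing
  have hflt : f 1 < f 0 := by
    have hanti : StrictAntiOn f (Icc (0:ℝ) 1) := by
      apply strictAntiOn_of_deriv_neg (convex_Icc 0 1) hfc
      intro x hx
      rw [interior_Icc] at hx
      rw [(hderiv x hx).deriv]
      exact hder x (Ioo_subset_Icc_self hx)
    exact hanti ⟨le_rfl, zero_le_one⟩ ⟨zero_le_one, le_rfl⟩ zero_lt_one
  set I : ℂ := (f 0 : ℂ) - Complex.exp s * (f 1 : ℂ) with hI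
  have hJI : (∫ t in (0:ℝ)..1, Complex.exp (s * t) * (g t : ℂ)) = -I := by
    rw [key, hI]; ring
  -- lower bound on ‖I‖
  have hexps : ‖Complex.exp s‖ ≤ 1 := by
    rw [Complex.norm_exp]
    calc Real.exp s.re ≤ Real.exp 0 := Real.exp_le_exp.mpr hre
      _ = 1 := Real.exp_zero
  have hIlb : f 0 - f 1 ≤ ‖I‖ := by
    have h1 : ‖Complex.exp s * (f 1 : ℂ)‖ ≤ f 1 := by
      rw [norm_mul, Complex.norm_real, Real.norm_eq_abs, abs_of_pos (hpos 1 ⟨zero_le_one, le_rfl⟩)]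
      nlinarith [hpos 1 (Set.mem_Icc.mpr ⟨zero_le_one, le_rfl⟩)]
    have h2 : ‖((f 0 : ℝ) : ℂ)‖ = f 0 := by
      rw [Complex.norm_real, Real.norm_eq_abs, abs_of_pos (hpos 0 ⟨le_rfl, zero_le_one⟩)]
    calc f 0 - f 1 ≤ ‖((f 0:ℝ) : ℂ)‖ - ‖Complex.exp s * (f 1 : ℂ)‖ := by rw [h2]; linarith
      _ ≤ ‖I‖ := norm_sub_norm_le _ _
  have hIpos : 0 < ‖I‖ := lt_of_lt_of_le (by linarith) hIlb
  -- integrability of the main integrand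
  have hInt1 : IntervalIntegrable (fun t => Complex.exp (s * t) * (g t : ℂ))
      MeasureTheory.volume 0 1 := by
    apply ContinuousOn.intervalIntegrable
    rw [huIcc]
    exact hce.continuousOn.mul hgcC
  -- ‖I‖² as an integral
  have hre_int : (∫ t in (0:ℝ)..1, (starRingEnd ℂ) I * (Complex.exp (s * t) * (g t : ℂ))).re
      = ∫ t in (0:ℝ)..1, ((starRingEnd ℂ) I * Complex.exp (s * t)).re * g t := by
    have h := Complex.reCLM.intervalIntegral_comp_comm (hInt1.const_mul ((starRingEnd ℂ) I))
    rw [show (∫ t in (0:ℝ)..1, (starRingEnd ℂ) I * (Complex.exp (s * t) * (g t : ℂ))).re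
      = Complex.reCLM (∫ t in (0:ℝ)..1, (starRingEnd ℂ) I * (Complex.exp (s * t) * (g t : ℂ)))
      from rfl, ← h]
    apply intervalIntegral.integral_congr
    intro t _
    simp only [Complex.reCLM_apply, Complex.mul_re, Complex.ofReal_re, Complex.ofReal_im,
      Complex.mul_im]
    ring
  have hsq : ‖I‖ ^ 2
      = ∫ t in (0:ℝ)..1, ((starRingEnd ℂ) I * Complex.exp (s * t)).re * (-(g t)) := by
    have h1 : ((starRingEnd ℂ) I * I).re = ‖I‖ ^ 2 := by
      rw [Complex.sq_norm]
      simp [Complex.normSq_apply, Complex.mul_re]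
    have h2 : (starRingEnd ℂ) I * I
        = -∫ t in (0:ℝ)..1, (starRingEnd ℂ) I * (Complex.exp (s * t) * (g t : ℂ)) := by
      rw [intervalIntegral.integral_const_mul, hJI]; ring
    have h3 : (∫ t in (0:ℝ)..1, ((starRingEnd ℂ) I * Complex.exp (s * t)).re * (-(g t)))
        = -∫ t in (0:ℝ)..1, ((starRingEnd ℂ) I * Complex.exp (s * t)).re * g t := by
      rw [← intervalIntegral.integral_neg]
      apply intervalIntegral.integral_congr
      intro t _
      ring
    rw [h3, ← hre_int, ← h1, h2]
    simp
  -- pointwise bound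
  have hbound : ∀ t ∈ Icc (0:ℝ) 1, ((starRingEnd ℂ) I * Complex.exp (s * t)).re ≤ ‖I‖ := by
    intro t ht
    calc ((starRingEnd ℂ) I * Complex.exp (s * t)).re
        ≤ ‖(starRingEnd ℂ) I * Complex.exp (s * t)‖ := by
          exact Complex.re_le_norm _
      _ = ‖I‖ * ‖Complex.exp (s * t)‖ := by rw [norm_mul, RCLike.norm_conj]
      _ ≤ ‖I‖ * 1 := by
          apply mul_le_mul_of_nonneg_left _ (norm_nonneg _)
          rw [Complex.norm_exp]
          have h5 : (s * (t:ℂ)).re = s.re * t := by simp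
          rw [h5]
          calc Real.exp (s.re * t) ≤ Real.exp 0 := by
                apply Real.exp_le_exp.mpr
                nlinarith [ht.1]
            _ = 1 := Real.exp_zero
      _ = ‖I‖ := mul_one _
  -- existence of a strict point
  have hexist : ∃ c ∈ Icc (0:ℝ) 1, ((starRingEnd ℂ) I * Complex.exp (s * c)).re < ‖I‖ := by
    rcases hre.lt_or_eq with hlt | heq
    · refine ⟨1, ⟨zero_le_one, le_rfl⟩, ?_⟩
      calc ((starRingEnd ℂ) I * Complex.exp (s * 1)).re
          ≤ ‖(starRingEnd ℂ) I * Complex.exp (s * 1)‖ := by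
            exact Complex.re_le_norm _
        _ = ‖I‖ * Real.exp s.re := by
            rw [norm_mul, RCLike.norm_conj]
            norm_num [Complex.norm_exp]
        _ < ‖I‖ * 1 := by
            apply mul_lt_mul_of_pos_left _ hIpos
            calc Real.exp s.re < Real.exp 0 := Real.exp_lt_exp.mpr hlt
              _ = 1 := Real.exp_zero
        _ = ‖I‖ := mul_one _
    · by_cases hc : ((starRingEnd ℂ) I).re < ‖I‖
      · refine ⟨0, ⟨le_rfl, zero_le_one⟩, ?_⟩
        simpa using hc
      · push_neg at hc
        have h1 : I.re = ‖I‖ := by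
          have := Complex.re_le_norm I
          simp only [Complex.conj_re] at hc
          linarith
        have h2 : I.im = 0 := by
          have hns := Complex.sq_norm I
          rw [Complex.normSq_apply] at hns
          nlinarith
        set τ := s.im with hτdef
        have hτ : τ ≠ 0 := by
          intro h
          apply hs0
          exact Complex.ext heq h
        set c := min 1 (π / |τ|) with hcdef
        have hcpos : 0 < c := lt_min zero_lt_one (div_pos Real.pi_pos (abs_pos.mpr hτ))
        have hcle : c ≤ 1 := min_le_left _ _
        have habs : |τ * c| ≤ π := by
          rw [abs_mul, abs_of_pos hcpos]
          calc |τ| * c ≤ |τ| * (π / |τ|) := by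
                apply mul_le_mul_of_nonneg_left (min_le_right _ _) (abs_nonneg _)
            _ = π := by field_simp
        have hcne : τ * c ≠ 0 := mul_ne_zero hτ hcpos.ne'
        have hcos : Real.cos (τ * c) < 1 := by
          refine lt_of_le_of_ne (Real.cos_le_one _) fun h => ?_
          obtain ⟨n, hn⟩ := (Real.cos_eq_one_iff _).mp h
          rcases eq_or_ne n 0 with rfl | hn0
          · rw [Int.cast_zero, zero_mul] at hn
            exact hcne hn.symm
          · have h1n : (1:ℝ) ≤ |(n:ℝ)| := by exact_mod_cast Int.one_le_abs hn0
            have : |(n:ℝ) * (2 * π)| = |(n:ℝ)| * (2 * π) := by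
              rw [abs_mul, abs_of_pos (by positivity : (0:ℝ) < 2 * π)]
            rw [hn] at this
            nlinarith [Real.pi_pos]
        refine ⟨c, ⟨hcpos.le, hcle⟩, ?_⟩
        have hconj : (starRingEnd ℂ) I = I := by
          apply Complex.ext <;> simp [h2]
        have hrexp : (Complex.exp (s * c)).re = Real.cos (τ * c) := by
          rw [Complex.exp_re]
          have h5 : (s * (c:ℂ)).re = s.re * c := by simp
          have h6 : (s * (c:ℂ)).im = τ * c := by simp [hτdef]
          rw [h5, h6, heq]
          simp
        have h7 : ((starRingEnd ℂ) I * Complex.exp (s * c)).re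
            = I.re * Real.cos (τ * c) := by
          rw [hconj, Complex.mul_re, h2, hrexp]
          ring
        rw [h7, h1]
        nlinarith
  -- main strict inequality
  obtain ⟨c, hcmem, hclt⟩ := hexist
  have hgneg : ∀ t ∈ Icc (0:ℝ) 1, 0 < -(g t) := fun t ht => neg_pos.mpr (hder t ht)
  have hmain : (∫ t in (0:ℝ)..1, ((starRingEnd ℂ) I * Complex.exp (s * t)).re * (-(g t)))
      < ∫ t in (0:ℝ)..1, ‖I‖ * (-(g t)) := by
    apply intervalIntegral.integral_lt_integral_of_continuousOn_of_le_of_exists_lt zero_lt_one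
    · exact ((Complex.continuous_re.comp (continuous_const.mul hce)).continuousOn).mul hgc.neg
    · exact continuousOn_const.mul hgc.neg
    · intro x hx
      have hx' : x ∈ Icc (0:ℝ) 1 := ⟨hx.1.le, hx.2⟩
      exact mul_le_mul_of_nonneg_right (hbound x hx') (hgneg x hx').le
    · exact ⟨c, hcmem, mul_lt_mul_of_pos_right hclt (hgneg c hcmem)⟩
  have hrhs : (∫ t in (0:ℝ)..1, ‖I‖ * (-(g t))) = ‖I‖ * (f 0 - f 1) := by
    rw [intervalIntegral.integral_const_mul, intervalIntegral.integral_neg, hreal]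
    ring
  rw [← hsq, hrhs] at hmain
  nlinarith
end
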